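/- Let q = 8m + 3 be a prime power, let F be a finite field with q² elements with primitive element ω, and let Lᵢ = Cᵢ⁽q⁺¹⁾ (indices mod q+1). Let I ⊆ {0,1,…,7} with |I| = 3 such that I contains exactly one odd element or exactly one even element, call it y, and set J₁ = {y + 2 + 4i mod (q+1) : 0 ≤ i ≤ m−1}, J₂ = {y + 4i mod (q+1) : 0 ≤ i ≤ m−1}. Define (cyclotomic indices mod 8): E₀ = (⋃_{i∈I} Cᵢ⁽⁸⁾) ∪ (⋃_{j∈J₁} Lⱼ), E₁ = (⋃_{i∈I} C₍ᵢ₊₂₎⁽⁸⁾) ∪ (⋃_{j∈J₂} Lⱼ), E₂ = (⋃_{i∈I} C₍ᵢ₊₁₎⁽⁸⁾) ∪ (⋃_{j∈J₁} L₍ⱼ₊₁₎), E₃ = (⋃_{i∈I} C₍ᵢ₊₃₎⁽⁸⁾) ∪ (⋃_{j∈J₂} L₍ⱼ₊₁₎). Then for every x ∈ F: N(E₀,E₁;x) + N(E₁,E₀;x) + N(E₂,E₃;x) + N(E₃,E₂;x) = Σ_{h∈{0,1}} Σ_{i∈I} Σ_{j∈I} ( N(C₍ᵢ₊ₕ₎⁽⁸⁾,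 C₍ⱼ₊₂₊ₕ₎⁽⁸⁾; x) + N(C₍ᵢ₊₂₊ₕ₎⁽⁸⁾, C₍ⱼ₊ₕ₎⁽⁸⁾; x) ) + z(x), where z(0) = 8m(4m+1) and z(x) = m(28m+5) for x ≠ 0. -/

import Mathlib

/-- The number of pairs `(u, v) ∈ A × B` with `u - v = g`. -/
noncomputable def diffCount {G : Type*} [AddGroup G] (A B : Set G) (g : G) : ℕ :=
  Set.ncard {p : G × G | p.1 ∈ A ∧ p.2 ∈ B ∧ p.1 - p.2 = g}

/-- The `N`-th cyclotomic class `C_i^{(N)} = {ω^(i+Nk) : k ∈ ℤ}`. -/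
def cyc {F : Type*} [Field F] (ω : F) (N : ℕ) (i : ℤ) : Set F :=
  {x : F | ∃ k : ℤ, x = ω ^ (i + (N : ℤ) * k)}

set_option linter.unusedSectionVars false
set_option linter.unusedVariables false
open scoped Classical


section S1
variable {G : Type*} [AddCommGroup G] [Fintype G]

lemma diffCount_union_left {A A' B : Set G} (h : Disjoint A A') (x : G) :
    diffCount (A ∪ A') B x = diffCount A B x + diffCount A' B x := by
  unfold diffCount
  rw [← Set.ncard_union_eq _ (Set.toFinite _) (Set.toFinite _)]
  · congr 1; ext p; simp [Set.mem_union]; tauto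
  · rw [Set.disjoint_left] at h ⊢
    rintro p ⟨h1, h2, h3⟩ ⟨h1', _, _⟩; exact h h1 h1'

lemma diffCount_union_right {A B B' : Set G} (h : Disjoint B B') (x : G) :
    diffCount A (B ∪ B') x = diffCount A B x + diffCount A B' x := by
  unfold diffCount
  rw [← Set.ncard_union_eq _ (Set.toFinite _) (Set.toFinite _)]
  · congr 1; ext p; simp [Set.mem_union]; tauto
  · rw [Set.disjoint_left] at h ⊢
    rintro p ⟨h1, h2, h3⟩ ⟨_, h2', _⟩; exact h h2 h2'

lemma diffCount_biUnion_left {ι : Type*} (s : Finset ι) (A : ι → Set G) (B : Set G) (x : G)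
    (h : ∀ i ∈ s, ∀ j ∈ s, i ≠ j → Disjoint (A i) (A j)) :
    diffCount (⋃ i ∈ s, A i) B x = ∑ i ∈ s, diffCount (A i) B x := by
  classical
  induction s using Finset.induction with
  | empty => simp [diffCount]
  | @insert a s hni ih =>
    rw [Finset.set_biUnion_insert, Finset.sum_insert hni,
      diffCount_union_left, ih]
    · intro i hi j hj hij
      exact h i (Finset.mem_insert_of_mem hi) j (Finset.mem_insert_of_mem hj) hij
    · rw [Set.disjoint_iUnion₂_right]
      intro i hi
      exact h a (Finset.mem_insert_self a s) i (Finset.mem_insert_of_mem hi)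
        (by rintro rfl; exact hni hi)

lemma diffCount_biUnion_right {ι : Type*} (s : Finset ι) (A : Set G) (B : ι → Set G) (x : G)
    (h : ∀ i ∈ s, ∀ j ∈ s, i ≠ j → Disjoint (B i) (B j)) :
    diffCount A (⋃ i ∈ s, B i) x = ∑ i ∈ s, diffCount A (B i) x := by
  classical
  induction s using Finset.induction with
  | empty => simp [diffCount]
  | @insert a s hni ih =>
    rw [Finset.set_biUnion_insert, Finset.sum_insert hni,
      diffCount_union_right, ih]
    · intro i hi j hj hij
      exact h i (Finset.mem_insert_of_mem hi) j (Finset.mem_insert_of_mem hj) hij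
    · rw [Set.disjoint_iUnion₂_right]
      intro i hi
      exact h a (Finset.mem_insert_self a s) i (Finset.mem_insert_of_mem hi)
        (by rintro rfl; exact hni hi)

lemma diffCount_swap (A B : Set G) (x : G) : diffCount A B x = diffCount B A (-x) := by
  unfold diffCount
  have : {p : G × G | p.1 ∈ B ∧ p.2 ∈ A ∧ p.1 - p.2 = -x}
      = (fun p : G × G => (p.2, p.1)) '' {p : G × G | p.1 ∈ A ∧ p.2 ∈ B ∧ p.1 - p.2 = x} := by
    ext ⟨u, v⟩
    simp only [Set.mem_setOf_eq, Set.mem_image, Prod.exists, Prod.mk.injEq]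
    constructor
    · rintro ⟨h1, h2, h3⟩
      exact ⟨v, u, ⟨h2, h1, by linear_combination (norm := abel) -h3⟩, rfl, rfl⟩
    · rintro ⟨a, b, ⟨h1, h2, h3⟩, rfl, rfl⟩
      exact ⟨h2, h1, by linear_combination (norm := abel) -h3⟩
  rw [this, Set.ncard_image_of_injective _ (fun p p' h => by
    simpa [Prod.ext_iff, and_comm] using h)]

lemma diffCount_neg (A B : Set G) (x : G) :
    diffCount A B x = diffCount (Neg.neg '' A) (Neg.neg '' B) (-x) := by
  unfold diffCount
  have : {p : G × G | p.1 ∈ Neg.neg '' A ∧ p.2 ∈ Neg.neg '' B ∧ p.1 - p.2 = -x}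
      = (fun p : G × G => (-p.1, -p.2)) '' {p : G × G | p.1 ∈ A ∧ p.2 ∈ B ∧ p.1 - p.2 = x} := by
    ext ⟨u, v⟩
    simp only [Set.mem_setOf_eq, Set.mem_image, Prod.exists, Prod.mk.injEq]
    constructor
    · rintro ⟨⟨a, ha, rfl⟩, ⟨b, hb, rfl⟩, h3⟩
      exact ⟨a, b, ⟨ha, hb, by linear_combination (norm := abel) -h3⟩, rfl, rfl⟩
    · rintro ⟨a, b, ⟨h1, h2, h3⟩, rfl, rfl⟩
      exact ⟨⟨a, h1, rfl⟩, ⟨b, h2, rfl⟩, by linear_combination (norm := abel) -h3⟩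
  rw [this, Set.ncard_image_of_injective _ (fun p p' h => by
    simpa [Prod.ext_iff, neg_inj] using h)]

lemma diffCount_eq_ncard_sol (A B : Set G) (x : G) :
    diffCount A B x = Set.ncard {v : G | v ∈ B ∧ v + x ∈ A} := by
  unfold diffCount
  have : {p : G × G | p.1 ∈ A ∧ p.2 ∈ B ∧ p.1 - p.2 = x}
      = (fun v : G => (v + x, v)) '' {v : G | v ∈ B ∧ v + x ∈ A} := by
    ext ⟨u, v⟩
    simp only [Set.mem_setOf_eq, Set.mem_image, Prod.mk.injEq]
    constructor
    · rintro ⟨h1, h2, h3⟩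
      exact ⟨v, ⟨h2, by rw [show v + x = u by rw [← h3]; abel]; exact h1⟩,
        by rw [← h3]; abel, rfl⟩
    · rintro ⟨a, ⟨h1, h2⟩, rfl, rfl⟩
      exact ⟨h2, h1, by abel⟩
  rw [this, Set.ncard_image_of_injective _ (fun p p' h => by simpa using h)]

end S1


section S2
variable {q : ℕ} {F : Type*} [Field F] {ω : F}




lemma myPowIff (hω0 : ω ≠ 0) (hord : orderOf ω = q ^ 2 - 1) (a b : ℤ) :
    ω ^ a = ω ^ b ↔ ((q ^ 2 - 1 : ℕ) : ℤ) ∣ b - a := by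
  set u := Units.mk0 ω hω0 with hu
  have hcoe : ∀ c : ℤ, ω ^ c = ((u ^ c : Fˣ) : F) := fun c =>
    (Units.val_zpow_eq_zpow_val u c).symm
  have ho : (orderOf u : ℤ) = ((q ^ 2 - 1 : ℕ) : ℤ) := by
    rw [← orderOf_units]; exact congrArg Nat.cast hord
  rw [hcoe, hcoe]
  constructor
  · intro h
    have h2 := (zpow_eq_zpow_iff_modEq.1 (Units.ext h)).dvd
    rwa [ho] at h2
  · intro h
    refine congrArg _ (zpow_eq_zpow_iff_modEq.2 ?_)
    rw [Int.modEq_iff_dvd, ho]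
    exact h

lemma cyc_ne_zero (hω0 : ω ≠ 0) {N : ℕ} {i : ℤ} {x : F} (h : x ∈ cyc ω N i) : x ≠ 0 := by
  obtain ⟨k, rfl⟩ := h
  exact zpow_ne_zero _ hω0

lemma cyc_pow_mem (hω0 : ω ≠ 0) (hord : orderOf ω = q ^ 2 - 1) {N : ℕ}
    (hN : N ∣ q ^ 2 - 1) (i e : ℤ) :
    ω ^ e ∈ cyc ω N i ↔ (N : ℤ) ∣ e - i := by
  constructor
  · rintro ⟨k, hk⟩
    rw [myPowIff hω0 hord] at hk
    obtain ⟨c, hc⟩ := hN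
    obtain ⟨t, ht⟩ := hk
    have hc' : ((q ^ 2 - 1 : ℕ) : ℤ) = (N : ℤ) * (c : ℤ) := by exact_mod_cast hc
    rw [hc'] at ht
    exact ⟨k - c * t, by linarith⟩
  · rintro ⟨t, ht⟩
    exact ⟨t, by rw [show i + (N:ℤ) * t = e by linarith]⟩

lemma cyc_eq {N : ℕ} {i i' : ℤ} (h : (N : ℤ) ∣ i - i') : cyc ω N i = cyc ω N i' := by
  obtain ⟨d, hd⟩ := h
  ext x
  constructor
  · rintro ⟨k, rfl⟩
    exact ⟨k + d, by rw [show i' + (N:ℤ)*(k+d) = i + (N:ℤ)*k by linarith]⟩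
  · rintro ⟨k, rfl⟩
    exact ⟨k - d, by rw [show i' + (N:ℤ)*k = i + (N:ℤ)*(k-d) by linarith]⟩

lemma cyc_mem_iff (hω0 : ω ≠ 0) (hord : orderOf ω = q ^ 2 - 1) {N : ℕ}
    (hN : N ∣ q ^ 2 - 1) (i : ℤ) (e : ℕ) :
    ω ^ e ∈ cyc ω N i ↔ (N : ℤ) ∣ (e : ℤ) - i := by
  rw [← zpow_natCast ω e]
  exact cyc_pow_mem hω0 hord hN i e

lemma cyc_disjoint (hω0 : ω ≠ 0) (hord : orderOf ω = q ^ 2 - 1) {N : ℕ}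
    (hN : N ∣ q ^ 2 - 1) {i i' : ℤ} (h : ¬ (N : ℤ) ∣ i - i') :
    Disjoint (cyc ω N i) (cyc ω N i') := by
  rw [Set.disjoint_left]
  rintro x ⟨k, rfl⟩ hx'
  rw [cyc_pow_mem hω0 hord hN] at hx'
  obtain ⟨t, ht⟩ := hx'
  exact h ⟨t - k, by linarith⟩

lemma cyc_ncard (hω0 : ω ≠ 0) (hord : orderOf ω = q ^ 2 - 1) {N : ℕ}
    (hN : N ∣ q ^ 2 - 1) (hpos : 0 < q ^ 2 - 1) (hNpos : 0 < N) (i : ℤ) :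
    (cyc ω N i).ncard = (q ^ 2 - 1) / N := by
  classical
  set r : ℕ := (q ^ 2 - 1) / N with hr
  have hrpos : 0 < r := Nat.div_pos (Nat.le_of_dvd hpos hN) hNpos
  have hnr : (((q ^ 2 - 1 : ℕ)) : ℤ) = (N : ℤ) * (r : ℤ) := by
    have := Nat.mul_div_cancel' hN
    exact_mod_cast this.symm
  have key : cyc ω N i = ↑((Finset.range r).image fun k : ℕ => ω ^ (i + (N:ℤ) * k)) := by
    ext x
    simp only [Finset.coe_image, Set.mem_image, Finset.mem_coe, Finset.mem_range]
    constructor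
    · rintro ⟨k, rfl⟩
      have h1 : 0 ≤ k % (r:ℤ) := Int.emod_nonneg k (by positivity)
      have h2 : k % (r:ℤ) < r := Int.emod_lt_of_pos k (by positivity)
      have htn : ((k % (r:ℤ)).toNat : ℤ) = k - (r:ℤ) * (k / r) := by
        rw [Int.toNat_of_nonneg h1, Int.emod_def]
      refine ⟨(k % (r:ℤ)).toNat, by omega, ?_⟩
      rw [myPowIff hω0 hord]
      refine ⟨k / (r:ℤ), ?_⟩
      rw [htn, hnr]
      ring
    · rintro ⟨k, hk, rfl⟩
      exact ⟨(k:ℤ), rfl⟩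
  rw [key, Set.ncard_coe_finset, Finset.card_image_of_injOn, Finset.card_range]
  intro k hk k' hk' he
  simp only [Finset.coe_range, Set.mem_Iio] at hk hk'
  rw [myPowIff hω0 hord, hnr] at he
  have : (i + (N:ℤ) * k') - (i + (N:ℤ) * k) = (N:ℤ) * ((k':ℤ) - k) := by ring
  rw [this, mul_dvd_mul_iff_left (by positivity : (N:ℤ) ≠ 0)] at he
  obtain ⟨t, ht⟩ := he
  have h7 : t = 0 := by
    by_contra h7
    have h8 : 1 ≤ t ∨ t ≤ -1 := by omega
    have hr' : (0:ℤ) ≤ (r:ℤ) := by positivity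
    rcases h8 with h8|h8
    · have : (r:ℤ) * 1 ≤ (r:ℤ) * t := mul_le_mul_of_nonneg_left h8 hr'
      omega
    · have : (r:ℤ) * t ≤ (r:ℤ) * (-1) := mul_le_mul_of_nonneg_left h8 hr'
      omega
  rw [h7] at ht
  omega

end S2


section S3
variable {q m : ℕ} {F : Type*} [Field F] [Fintype F] {ω : F}

/-- numeric fact -/
lemma qsq (hm : q = 8*m+3) : q^2 - 1 = (q+1)*(q-1) := by
  subst hm
  have h : (8*m+3)^2 = (8*m+3+1)*(8*m+3-1) + 1 := by
    have : 8*m+3-1 = 8*m+2 := by omega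
    rw [this]; ring
  omega

lemma qdvd (hm : q = 8*m+3) : (q+1) ∣ q^2 - 1 := ⟨q - 1, qsq hm⟩

lemma frobQ (hq : IsPrimePow q) (hF : Fintype.card F = q^2) (a b : F) :
    (a - b) ^ q = a ^ q - b ^ q := by
  obtain ⟨p, s, hp, hs, rfl⟩ := hq
  have hp' : Nat.Prime p := Nat.prime_iff.2 hp
  obtain ⟨n, hpr, hcard⟩ := FiniteField.card F (ringChar F)
  have hdvd : p ∣ ringChar F := by
    have h1 : p ∣ (ringChar F) ^ (n:ℕ) := by
      rw [← hcard, hF, ← pow_mul]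
      exact dvd_pow_self p (by omega)
    exact hp'.dvd_of_dvd_pow h1
  have hpq : ringChar F = p := ((Nat.prime_dvd_prime_iff_eq hp' hpr).1 hdvd).symm
  haveI : CharP F p := by rw [← hpq]; exact ringChar.charP F
  haveI : Fact p.Prime := ⟨hp'⟩
  exact sub_pow_char_pow a b s

end S3

def Kset {F : Type*} [Field F] (ω : F) (q : ℕ) : Set F := insert 0 (cyc ω (q+1) 0)

def lineS {F : Type*} [Field F] (ω : F) (q : ℕ) (j : ℤ) : Set F :=
  {x : F | ∃ a ∈ Kset ω q, x = ω ^ j * a}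

lemma ncard_prodSet {α β : Type*} (s : Set α) (t : Set β) :
    (s ×ˢ t).ncard = s.ncard * t.ncard := by
  rw [← Nat.card_coe_set_eq, ← Nat.card_coe_set_eq, ← Nat.card_coe_set_eq,
    Nat.card_congr (Equiv.Set.prod s t), Nat.card_prod]

section S4
variable {q m : ℕ} {F : Type*} [Field F] [Fintype F] {ω : F}

lemma hcastQ (hm : q = 8*m+3) : ((q^2-1 : ℕ):ℤ) = ((q:ℤ)+1)*((q:ℤ)-1) := by
  rw [qsq hm]
  have h1 : q - 1 = 8*m+2 := by omega
  rw [h1]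
  push_cast [hm]
  ring

lemma npos (hm : q = 8*m+3) : 0 < q^2 - 1 := by
  rw [qsq hm]
  exact Nat.mul_pos (by omega) (by omega)

lemma mem_K_iff (hω0 : ω ≠ 0) (hord : orderOf ω = q ^ 2 - 1) (hm : q = 8*m+3)
    (hω : ∀ x : F, x ≠ 0 → ∃ k : ℕ, x = ω ^ k) (x : F) :
    x ∈ Kset ω q ↔ x ^ q = x := by
  constructor
  · rintro (rfl | ⟨k, rfl⟩)
    · exact zero_pow (by omega)
    · rw [← zpow_natCast (ω ^ ((0:ℤ) + (q+1:ℕ) * k)) q, ← zpow_mul, myPowIff hω0 hord]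
      refine ⟨-k, ?_⟩
      rw [hcastQ hm]
      push_cast
      ring
  · intro hx
    by_cases hx0 : x = 0
    · exact hx0 ▸ Set.mem_insert 0 _
    · obtain ⟨e, rfl⟩ := hω x hx0
      have hx' : ω ^ ((e:ℤ) * q) = ω ^ ((e:ℤ)) := by
        rw [zpow_mul, zpow_natCast, zpow_natCast]; exact_mod_cast hx
      rw [myPowIff hω0 hord, hcastQ hm] at hx'
      obtain ⟨t, ht⟩ := hx'
      have h9 : ((q:ℤ)-1) * ((e:ℤ) + ((q:ℤ)+1)*t) = 0 := by linear_combination -ht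
      have hq1 : ((q:ℤ)-1) ≠ 0 := by
        subst hm; push_cast; omega
      have h10 : (e:ℤ) = ((q:ℤ)+1) * (-t) := by
        rcases mul_eq_zero.1 h9 with h | h
        · exact absurd h hq1
        · linarith
      refine Set.mem_insert_iff.2 (Or.inr ⟨-t, ?_⟩)
      rw [← zpow_natCast ω e]
      congr 1
      push_cast
      rw [h10]
      ring

lemma K_sub (hω0 : ω ≠ 0) (hord : orderOf ω = q ^ 2 - 1) (hm : q = 8*m+3)
    (hω : ∀ x : F, x ≠ 0 → ∃ k : ℕ, x = ω ^ k)
    (hq : IsPrimePow q) (hF : Fintype.card F = q^2) {a b : F}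
    (ha : a ∈ Kset ω q) (hb : b ∈ Kset ω q) : a - b ∈ Kset ω q := by
  rw [mem_K_iff hω0 hord hm hω] at *
  rw [frobQ hq hF, ha, hb]

lemma line_eq_insert (hω0 : ω ≠ 0) (j : ℤ) :
    lineS ω q j = insert 0 (cyc ω (q+1) j) := by
  ext x
  constructor
  · rintro ⟨a, (rfl | ⟨k, rfl⟩), rfl⟩
    · simp
    · refine Set.mem_insert_iff.2 (Or.inr ⟨k, ?_⟩)
      rw [← zpow_add₀ hω0]
      congr 1
      ring
  · rintro (rfl | ⟨k, rfl⟩)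
    · exact ⟨0, Set.mem_insert 0 _, by ring⟩
    · refine ⟨ω ^ ((0:ℤ) + (q+1:ℕ) * k), Set.mem_insert_iff.2 (Or.inr ⟨k, rfl⟩), ?_⟩
      rw [← zpow_add₀ hω0]
      congr 1
      ring

lemma mem_line_of_cyc (hω0 : ω ≠ 0) {j : ℤ} {x : F} (h : x ∈ cyc ω (q+1) j) :
    x ∈ lineS ω q j := by
  rw [line_eq_insert hω0]; exact Set.mem_insert_iff.2 (Or.inr h)

lemma zero_mem_line (hω0 : ω ≠ 0) (j : ℤ) : (0:F) ∈ lineS ω q j := by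
  rw [line_eq_insert hω0]; exact Set.mem_insert 0 _

lemma mem_cyc_of_line (hω0 : ω ≠ 0) {j : ℤ} {x : F} (h : x ∈ lineS ω q j) (hx : x ≠ 0) :
    x ∈ cyc ω (q+1) j := by
  rw [line_eq_insert hω0] at h
  rcases h with h | h
  · exact absurd h hx
  · exact h

lemma line_sub (hω0 : ω ≠ 0) (hord : orderOf ω = q ^ 2 - 1) (hm : q = 8*m+3)
    (hω : ∀ x : F, x ≠ 0 → ∃ k : ℕ, x = ω ^ k)
    (hq : IsPrimePow q) (hF : Fintype.card F = q^2) {j : ℤ} {u v : F}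
    (hu : u ∈ lineS ω q j) (hv : v ∈ lineS ω q j) : u - v ∈ lineS ω q j := by
  obtain ⟨a, ha, rfl⟩ := hu
  obtain ⟨b, hb, rfl⟩ := hv
  exact ⟨a - b, K_sub hω0 hord hm hω hq hF ha hb, by ring⟩

lemma K_ncard (hω0 : ω ≠ 0) (hord : orderOf ω = q ^ 2 - 1) (hm : q = 8*m+3) :
    (Kset ω q).ncard = q := by
  unfold Kset
  rw [Set.ncard_insert_of_notMem (fun h => (cyc_ne_zero hω0 h) rfl) (Set.toFinite _),
    cyc_ncard hω0 hord (qdvd hm) (npos hm) (by omega), qsq hm,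
    Nat.mul_div_cancel_left _ (by omega)]
  omega

lemma line_ncard (hω0 : ω ≠ 0) (hord : orderOf ω = q ^ 2 - 1) (hm : q = 8*m+3) (j : ℤ) :
    (lineS ω q j).ncard = q := by
  rw [line_eq_insert hω0,
    Set.ncard_insert_of_notMem (fun h => (cyc_ne_zero hω0 h) rfl) (Set.toFinite _),
    cyc_ncard hω0 hord (qdvd hm) (npos hm) (by omega), qsq hm,
    Nat.mul_div_cancel_left _ (by omega)]
  omega

lemma line_inter (hω0 : ω ≠ 0) (hord : orderOf ω = q ^ 2 - 1) (hm : q = 8*m+3)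
    {j j' : ℤ} (h : ¬ ((q+1:ℕ):ℤ) ∣ j - j') {x : F}
    (hx : x ∈ lineS ω q j) (hx' : x ∈ lineS ω q j') : x = 0 := by
  by_contra hx0
  have h1 := mem_cyc_of_line hω0 hx hx0
  have h2 := mem_cyc_of_line hω0 hx' hx0
  exact Set.disjoint_left.1 (cyc_disjoint hω0 hord (qdvd hm) h) h1 h2

lemma line_exists_unique (hω0 : ω ≠ 0) (hord : orderOf ω = q ^ 2 - 1) (hm : q = 8*m+3)
    (hω : ∀ x : F, x ≠ 0 → ∃ k : ℕ, x = ω ^ k)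
    (hq : IsPrimePow q) (hF : Fintype.card F = q^2) {j j' : ℤ}
    (h : ¬ ((q+1:ℕ):ℤ) ∣ j - j') (x : F) :
    ∃! p : F × F, p.1 ∈ lineS ω q j ∧ p.2 ∈ lineS ω q j' ∧ p.1 - p.2 = x := by
  have huniq : ∀ (z : F) (p p' : F × F),
      (p.1 ∈ lineS ω q j ∧ p.2 ∈ lineS ω q j' ∧ p.1 - p.2 = z) →
      (p'.1 ∈ lineS ω q j ∧ p'.2 ∈ lineS ω q j' ∧ p'.1 - p'.2 = z) → p = p' := by
    rintro z p p' ⟨h1, h2, h3⟩ ⟨h1', h2', h3'⟩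
    have hd : p.1 - p'.1 = p.2 - p'.2 := by
      have : p.1 - p.2 = p'.1 - p'.2 := h3.trans h3'.symm
      linear_combination this
    have hz : p.1 - p'.1 = 0 := by
      refine line_inter hω0 hord hm h
        (line_sub hω0 hord hm hω hq hF h1 h1') ?_
      rw [hd]
      exact line_sub hω0 hord hm hω hq hF h2 h2'
    have e1 : p.1 = p'.1 := by linear_combination hz
    have e2 : p.2 = p'.2 := by
      have := hd
      rw [hz] at this
      linear_combination -this
    exact Prod.ext e1 e2
  -- existence via cardinality
  have himg : (fun p : F × F => p.1 - p.2) '' ((lineS ω q j) ×ˢ (lineS ω q j')) = Set.univ := by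
    have hinj : Set.InjOn (fun p : F × F => p.1 - p.2) ((lineS ω q j) ×ˢ (lineS ω q j')) := by
      rintro p hp p' hp' he
      simp only at he
      exact huniq (p.1 - p.2) p p' ⟨hp.1, hp.2, rfl⟩ ⟨hp'.1, hp'.2, he.symm⟩
    refine Set.eq_of_subset_of_ncard_le (Set.subset_univ _) ?_ (Set.toFinite _)
    rw [Set.ncard_image_of_injOn hinj, ncard_prodSet, line_ncard hω0 hord hm,
      line_ncard hω0 hord hm, Set.ncard_univ, Nat.card_eq_fintype_card, hF]
    rw [pow_two]
  have hx : x ∈ (fun p : F × F => p.1 - p.2) '' ((lineS ω q j) ×ˢ (lineS ω q j')) := by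
    rw [himg]; trivial
  obtain ⟨p, hp, hpx⟩ := hx
  exact ⟨p, ⟨hp.1, hp.2, hpx⟩, fun p' hp' => huniq x p' p hp' ⟨hp.1, hp.2, hpx⟩⟩

end S4

section S5
variable {q m : ℕ} {F : Type*} [Field F] [Fintype F] {ω : F}

lemma cancel4 {a c : ℤ} (h : 4 * a = 4 * c) : a = c := by omega

lemma dvd_q1_of (hm : q = 8*m+3) {a : ℤ} (h : ((q+1:ℕ):ℤ) ∣ a) : (4:ℤ) ∣ a := by
  obtain ⟨c, rfl⟩ := h
  refine ⟨((2*m+1 : ℕ):ℤ) * c, ?_⟩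
  push_cast [hm]
  ring

lemma q1_dvd_four_iff (hm : q = 8*m+3) {t t' : ℕ} (ht : t < 2*m+1) (ht' : t' < 2*m+1)
    (h : ((q+1:ℕ):ℤ) ∣ 4*((t:ℤ) - t')) : t = t' := by
  obtain ⟨c, hc⟩ := h
  have h4 : (4:ℤ) * ((t:ℤ) - t') = 4 * (((2*m+1:ℕ):ℤ) * c) := by
    rw [hc]; push_cast [hm]; ring
  have h5 : (t:ℤ) - t' = ((2*m+1:ℕ):ℤ) * c := cancel4 h4
  have h6 : (t:ℤ) - t' = 0 := by
    refine Int.eq_zero_of_abs_lt_dvd ⟨c, h5⟩ ?_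
    rw [abs_sub_lt_iff]
    constructor <;> push_cast <;> omega
  omega

lemma dvd8 (hm : q = 8*m+3) : 8 ∣ q^2 - 1 := by
  have h : q^2 = 8*(8*m^2+6*m+1) + 1 := by subst hm; ring
  exact ⟨8*m^2+6*m+1, by omega⟩

/-- ω^((q²-1)/2) = -1 -/
lemma omega_half (hω0 : ω ≠ 0) (hord : orderOf ω = q ^ 2 - 1) (hm : q = 8*m+3) :
    ω ^ (32*m^2+24*m+4 : ℕ) = -1 := by
  have hn : q^2 - 1 = 2*(32*m^2+24*m+4) := by
    have h : q^2 = 2*(32*m^2+24*m+4) + 1 := by subst hm; ring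
    omega
  have hv2 : (ω ^ (32*m^2+24*m+4 : ℕ)) * (ω ^ (32*m^2+24*m+4 : ℕ)) = 1 := by
    rw [← pow_add]
    have h2 : 32*m^2+24*m+4 + (32*m^2+24*m+4) = q^2 - 1 := by omega
    rw [h2, ← hord]
    exact pow_orderOf_eq_one ω
  rcases mul_self_eq_one_iff.1 hv2 with h | h
  · exfalso
    have hdvd : q^2 - 1 ∣ 32*m^2+24*m+4 := by
      rw [← hord]
      exact orderOf_dvd_of_pow_eq_one h
    have hle := Nat.le_of_dvd (by positivity) hdvd
    omega
  · exact h

lemma neg_image_cyc (hω0 : ω ≠ 0) {h : ℕ} (hh : ω ^ h = -1) (N : ℕ) (i : ℤ) :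
    Neg.neg '' cyc ω N i = cyc ω N (i + h) := by
  have key : ∀ z : ℤ, -(ω ^ z) = ω ^ (z + h) := by
    intro z
    rw [zpow_add₀ hω0, zpow_natCast, hh]
    ring
  ext x
  constructor
  · rintro ⟨w, ⟨k, rfl⟩, rfl⟩
    exact ⟨k, by rw [key]; congr 1; ring⟩
  · rintro ⟨k, rfl⟩
    refine ⟨ω ^ (i + (N:ℤ)*k), ⟨k, rfl⟩, ?_⟩
    rw [key]
    congr 1
    ring

lemma neg_image_cyc8 (hω0 : ω ≠ 0) (hord : orderOf ω = q ^ 2 - 1) (hm : q = 8*m+3) (i : ℤ) :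
    Neg.neg '' cyc ω 8 i = cyc ω 8 (i + 4) := by
  rw [neg_image_cyc hω0 (omega_half hω0 hord hm) 8 i]
  refine cyc_eq ⟨4*(m:ℤ)^2 + 3*m, ?_⟩
  push_cast
  ring

lemma neg_image_cycL (hω0 : ω ≠ 0) (hord : orderOf ω = q ^ 2 - 1) (hm : q = 8*m+3) (j : ℤ) :
    Neg.neg '' cyc ω (q+1) j = cyc ω (q+1) j := by
  rw [neg_image_cyc hω0 (omega_half hω0 hord hm) (q+1) j]
  refine cyc_eq ⟨(4*(m:ℤ)+1), ?_⟩
  push_cast [hm]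
  ring

lemma LL_zero (hω0 : ω ≠ 0) (hord : orderOf ω = q ^ 2 - 1) (hm : q = 8*m+3) (j j' : ℤ) :
    diffCount (cyc ω (q+1) j) (cyc ω (q+1) j') (0:F)
      = if ((q+1:ℕ):ℤ) ∣ j - j' then q - 1 else 0 := by
  rw [diffCount_eq_ncard_sol]
  have hset : {v : F | v ∈ cyc ω (q+1) j' ∧ v + 0 ∈ cyc ω (q+1) j}
      = cyc ω (q+1) j' ∩ cyc ω (q+1) j := by
    ext v
    simp only [Set.mem_setOf_eq, add_zero, Set.mem_inter_iff]
  rw [hset]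
  split_ifs with hd
  · have he : cyc ω (q+1) j' = cyc ω (q+1) j :=
      cyc_eq (by rw [show j' - j = -(j-j') by ring]; exact dvd_neg.mpr hd)
    rw [he, Set.inter_self,
      cyc_ncard hω0 hord (qdvd hm) (npos hm) (by omega), qsq hm,
      Nat.mul_div_cancel_left _ (by omega)]
  · have hdis : Disjoint (cyc ω (q+1) j') (cyc ω (q+1) j) :=
      cyc_disjoint hω0 hord (qdvd hm)
        (by rw [show j' - j = -(j-j') by ring]; exact fun hc => hd (dvd_neg.mp hc))
    rw [Set.disjoint_iff_inter_eq_empty.1 hdis, Set.ncard_empty]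

lemma LL_same (hω0 : ω ≠ 0) (hord : orderOf ω = q ^ 2 - 1) (hm : q = 8*m+3)
    (hω : ∀ x : F, x ≠ 0 → ∃ k : ℕ, x = ω ^ k)
    (hq : IsPrimePow q) (hF : Fintype.card F = q^2) (j : ℤ) {x : F} (hx : x ≠ 0) :
    diffCount (cyc ω (q+1) j) (cyc ω (q+1) j) x
      = if x ∈ cyc ω (q+1) j then q - 2 else 0 := by
  rw [diffCount_eq_ncard_sol]
  by_cases hxm : x ∈ cyc ω (q+1) j
  · rw [if_pos hxm]
    have hxl : x ∈ lineS ω q j := mem_line_of_cyc hω0 hxm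
    have hnegx : -x ∈ lineS ω q j := by
      have h0 : (0:F) - x ∈ lineS ω q j :=
        line_sub hω0 hord hm hω hq hF (zero_mem_line hω0 j) hxl
      rwa [zero_sub] at h0
    have hset : {v : F | v ∈ cyc ω (q+1) j ∧ v + x ∈ cyc ω (q+1) j}
        = lineS ω q j \ {0, -x} := by
      ext v
      simp only [Set.mem_setOf_eq, Set.mem_diff, Set.mem_insert_iff, Set.mem_singleton_iff]
      constructor
      · rintro ⟨h1, h2⟩
        refine ⟨mem_line_of_cyc hω0 h1, ?_⟩
        push_neg
        refine ⟨cyc_ne_zero hω0 h1, fun hv => (cyc_ne_zero hω0 h2) ?_⟩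
        rw [hv]; ring
      · rintro ⟨h1, h2⟩
        push_neg at h2
        have hvx : v + x ∈ lineS ω q j := by
          have : v - (-x) ∈ lineS ω q j := line_sub hω0 hord hm hω hq hF h1 hnegx
          rwa [sub_neg_eq_add] at this
        refine ⟨mem_cyc_of_line hω0 h1 h2.1, mem_cyc_of_line hω0 hvx fun hc => h2.2 ?_⟩
        linear_combination hc
    rw [hset, Set.ncard_diff ?_ (Set.toFinite _)]
    · rw [line_ncard hω0 hord hm,
        Set.ncard_pair (show (0:F) ≠ -x from fun hc => hx (neg_eq_zero.mp hc.symm))]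
    · exact Set.insert_subset (zero_mem_line hω0 j) (Set.singleton_subset_iff.2 hnegx)
  · rw [if_neg hxm]
    have hset : {v : F | v ∈ cyc ω (q+1) j ∧ v + x ∈ cyc ω (q+1) j} = ∅ := by
      rw [Set.eq_empty_iff_forall_notMem]
      rintro v ⟨h1, h2⟩
      apply hxm
      have hsub : (v + x) - v ∈ lineS ω q j :=
        line_sub hω0 hord hm hω hq hF (mem_line_of_cyc hω0 h2) (mem_line_of_cyc hω0 h1)
      have : (v + x) - v = x := by ring
      rw [this] at hsub
      exact mem_cyc_of_line hω0 hsub hx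
    rw [hset, Set.ncard_empty]

lemma LL_diff (hω0 : ω ≠ 0) (hord : orderOf ω = q ^ 2 - 1) (hm : q = 8*m+3)
    (hω : ∀ x : F, x ≠ 0 → ∃ k : ℕ, x = ω ^ k)
    (hq : IsPrimePow q) (hF : Fintype.card F = q^2) {j j' : ℤ}
    (hd : ¬ ((q+1:ℕ):ℤ) ∣ j - j') {x : F} (hx : x ≠ 0) :
    diffCount (cyc ω (q+1) j) (cyc ω (q+1) j') x
      = if x ∈ cyc ω (q+1) j ∨ x ∈ cyc ω (q+1) j' then 0 else 1 := by
  obtain ⟨p₀, hp₀, hup⟩ := line_exists_unique hω0 hord hm hω hq hF hd x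
  unfold diffCount
  by_cases h1 : x ∈ cyc ω (q+1) j
  · rw [if_pos (Or.inl h1)]
    have hx0 : ((x, (0:F)) : F × F) = p₀ :=
      hup _ ⟨mem_line_of_cyc hω0 h1, zero_mem_line hω0 j', by simp⟩
    have : {p : F × F | p.1 ∈ cyc ω (q+1) j ∧ p.2 ∈ cyc ω (q+1) j' ∧ p.1 - p.2 = x} = ∅ := by
      rw [Set.eq_empty_iff_forall_notMem]
      rintro p ⟨a1, a2, a3⟩
      have hpp : p = p₀ := hup _ ⟨mem_line_of_cyc hω0 a1, mem_line_of_cyc hω0 a2, a3⟩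
      have : p.2 = 0 := by rw [hpp, ← hx0]
      exact cyc_ne_zero hω0 a2 this
    rw [this, Set.ncard_empty]
  · by_cases h2 : x ∈ cyc ω (q+1) j'
    · rw [if_pos (Or.inr h2)]
      have hnegx : -x ∈ lineS ω q j' := by
        have h0 : (0:F) - x ∈ lineS ω q j' :=
          line_sub hω0 hord hm hω hq hF (zero_mem_line hω0 j') (mem_line_of_cyc hω0 h2)
        rwa [zero_sub] at h0
      have hx0 : (((0:F), -x) : F × F) = p₀ :=
        hup _ ⟨zero_mem_line hω0 j, hnegx, by simp⟩
      have : {p : F × F | p.1 ∈ cyc ω (q+1) j ∧ p.2 ∈ cyc ω (q+1) j' ∧ p.1 - p.2 = x} = ∅ := by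
        rw [Set.eq_empty_iff_forall_notMem]
        rintro p ⟨a1, a2, a3⟩
        have hpp : p = p₀ := hup _ ⟨mem_line_of_cyc hω0 a1, mem_line_of_cyc hω0 a2, a3⟩
        have : p.1 = 0 := by rw [hpp, ← hx0]
        exact cyc_ne_zero hω0 a1 this
      rw [this, Set.ncard_empty]
    · rw [if_neg (by tauto)]
      obtain ⟨hb1, hb2, hb3⟩ := hp₀
      have hp1 : p₀.1 ≠ 0 := by
        intro hc
        apply h2
        have hp2x : p₀.2 = -x := by rw [← hb3, hc]; ring
        have : -(-x) ∈ cyc ω (q+1) j' := by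
          have := neg_image_cycL hω0 hord hm j'
          rw [← this]
          exact ⟨p₀.2, mem_cyc_of_line hω0 hb2 (by
            rw [hp2x]; exact fun hc2 => hx (by linear_combination -hc2)), by rw [hp2x]⟩
        rwa [neg_neg] at this
      have hp2 : p₀.2 ≠ 0 := by
        intro hc
        apply h1
        have : p₀.1 = x := by rw [← hb3, hc]; ring
        rw [← this]
        exact mem_cyc_of_line hω0 hb1 hp1
      have : {p : F × F | p.1 ∈ cyc ω (q+1) j ∧ p.2 ∈ cyc ω (q+1) j' ∧ p.1 - p.2 = x} = {p₀} := by
        ext p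
        simp only [Set.mem_setOf_eq, Set.mem_singleton_iff]
        constructor
        · rintro ⟨a1, a2, a3⟩
          exact hup _ ⟨mem_line_of_cyc hω0 a1, mem_line_of_cyc hω0 a2, a3⟩
        · rintro rfl
          exact ⟨mem_cyc_of_line hω0 hb1 hp1, mem_cyc_of_line hω0 hb2 hp2, hb3⟩
      rw [this, Set.ncard_singleton]

end S5

section S6
variable {q m : ℕ} {F : Type*} [Field F] [Fintype F] {ω : F}

lemma C8_union (hω0 : ω ≠ 0) (hord : orderOf ω = q ^ 2 - 1) (hm : q = 8*m+3) (i : ℤ) :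
    cyc ω 8 i ∪ cyc ω 8 (i+4) = ⋃ t ∈ Finset.range (2*m+1), cyc ω (q+1) (i + 4*t) := by
  have hq1 : ((q:ℤ)+1) = 4*(2*(m:ℤ)+1) := by push_cast [hm]; ring
  ext x
  simp only [Set.mem_union, Set.mem_iUnion, Finset.mem_range, exists_prop]
  constructor
  · rintro (⟨k, rfl⟩ | ⟨k, rfl⟩)
    · set t0 : ℤ := (2*k) % (2*(m:ℤ)+1) with ht0
      have h1 : 0 ≤ t0 := Int.emod_nonneg _ (by omega)
      have h2 : t0 < 2*(m:ℤ)+1 := Int.emod_lt_of_pos _ (by omega)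
      refine ⟨t0.toNat, by omega, ?_⟩
      rw [cyc_pow_mem hω0 hord (qdvd hm)]
      have hmod : (2*(m:ℤ)+1) ∣ (2*k - t0) :=
        ⟨2*k / (2*(m:ℤ)+1), by rw [ht0, Int.emod_def]; ring⟩
      obtain ⟨c, hc⟩ := hmod
      refine ⟨c, ?_⟩
      push_cast
      rw [Int.toNat_of_nonneg h1, hq1]
      linarith [hc]
    · set t0 : ℤ := (1 + 2*k) % (2*(m:ℤ)+1) with ht0
      have h1 : 0 ≤ t0 := Int.emod_nonneg _ (by omega)
      have h2 : t0 < 2*(m:ℤ)+1 := Int.emod_lt_of_pos _ (by omega)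
      refine ⟨t0.toNat, by omega, ?_⟩
      rw [cyc_pow_mem hω0 hord (qdvd hm)]
      have hmod : (2*(m:ℤ)+1) ∣ (1 + 2*k - t0) :=
        ⟨(1 + 2*k) / (2*(m:ℤ)+1), by rw [ht0, Int.emod_def]; ring⟩
      obtain ⟨c, hc⟩ := hmod
      refine ⟨c, ?_⟩
      push_cast
      rw [Int.toNat_of_nonneg h1, hq1]
      linarith [hc]
  · rintro ⟨t, ht, k, rfl⟩
    have hrw : i + 4*(t:ℤ) + ((q:ℕ)+1:ℕ) * k = i + 4*((t:ℤ) + (2*m+1)*k) := by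
      push_cast [hm]; ring
    rcases Int.even_or_odd ((t:ℤ) + (2*m+1)*k) with ⟨s, hs⟩ | ⟨s, hs⟩
    · left
      rw [cyc_pow_mem hω0 hord (dvd8 hm)]
      refine ⟨s, ?_⟩
      rw [hrw, hs]
      ring
    · right
      rw [cyc_pow_mem hω0 hord (dvd8 hm)]
      refine ⟨s, ?_⟩
      rw [hrw, hs]
      ring

lemma cross_pair (hω0 : ω ≠ 0) (hord : orderOf ω = q ^ 2 - 1) (hm : q = 8*m+3)
    (i j : ℤ) (x : F) :
    diffCount (cyc ω 8 i) (cyc ω (q+1) j) x + diffCount (cyc ω (q+1) j) (cyc ω 8 i) x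
      = ∑ t ∈ Finset.range (2*m+1), diffCount (cyc ω (q+1) (i + 4*t)) (cyc ω (q+1) j) x := by
  have h2 : diffCount (cyc ω (q+1) j) (cyc ω 8 i) x
      = diffCount (cyc ω 8 (i+4)) (cyc ω (q+1) j) x := by
    rw [diffCount_swap, diffCount_neg, neg_neg, neg_image_cyc8 hω0 hord hm,
      neg_image_cycL hω0 hord hm]
  rw [h2, ← diffCount_union_left (cyc_disjoint hω0 hord (dvd8 hm)
    (by intro hc; omega)) x, C8_union hω0 hord hm i]
  exact diffCount_biUnion_left _ _ _ _ (fun t ht t' ht' hne =>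
    cyc_disjoint hω0 hord (qdvd hm) (fun hc => hne (by
      simp only [Finset.mem_range] at ht ht'
      exact q1_dvd_four_iff hm ht ht' (by
        rw [show 4*((t:ℤ) - t') = (i + 4*t) - (i + 4*t') by ring]; exact hc))))

lemma sumIte (hm : q = 8*m+3) (a g h : ℤ) :
    ∑ t ∈ Finset.range (2*m+1), (if ((q+1:ℕ):ℤ) ∣ (a + 4*t) then g else h)
      = if (4:ℤ) ∣ a then g + 2*m*h else (2*m+1)*h := by
  by_cases h4 : (4:ℤ) ∣ a
  · rw [if_pos h4]
    obtain ⟨s, rfl⟩ := h4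
    set t0 : ℤ := (-s) % (2*(m:ℤ)+1) with ht0
    have h1 : 0 ≤ t0 := Int.emod_nonneg _ (by omega)
    have h2 : t0 < 2*(m:ℤ)+1 := Int.emod_lt_of_pos _ (by omega)
    have hmem : t0.toNat ∈ Finset.range (2*m+1) := Finset.mem_range.2 (by omega)
    have hcond : ∀ t ∈ Finset.range (2*m+1),
        (((q+1:ℕ):ℤ) ∣ (4*s + 4*t)) ↔ t = t0.toNat := by
      intro t ht
      simp only [Finset.mem_range] at ht
      constructor
      · intro hc
        have := q1_dvd_four_iff hm ht (show t0.toNat < 2*m+1 by omega) (by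
          rw [show (4:ℤ)*((t:ℤ) - t0.toNat) = (4*s + 4*t) - (4*s + 4*t0.toNat) by ring]
          refine dvd_sub hc ?_
          -- (q+1) ∣ 4s + 4*t0
          have hmod : (2*(m:ℤ)+1) ∣ (-s - t0) :=
            ⟨(-s) / (2*(m:ℤ)+1), by rw [ht0, Int.emod_def]; ring⟩
          obtain ⟨c, hc2⟩ := hmod
          refine ⟨-c, ?_⟩
          rw [Int.toNat_of_nonneg h1]
          push_cast [hm]
          linarith [hc2])
        exact this
      · rintro rfl
        have hmod : (2*(m:ℤ)+1) ∣ (-s - t0) :=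
          ⟨(-s) / (2*(m:ℤ)+1), by rw [ht0, Int.emod_def]; ring⟩
        obtain ⟨c, hc2⟩ := hmod
        refine ⟨-c, ?_⟩
        rw [Int.toNat_of_nonneg h1]
        push_cast [hm]
        linarith [hc2]
    calc ∑ t ∈ Finset.range (2*m+1), (if ((q+1:ℕ):ℤ) ∣ (4*s + 4*t) then g else h)
        = ∑ t ∈ Finset.range (2*m+1), (h + if t = t0.toNat then g - h else 0) := by
          refine Finset.sum_congr rfl (fun t ht => ?_)
          rw [if_congr (hcond t ht) rfl rfl]
          split_ifs <;> ring
      _ = (2*m+1)*h + (g - h) := by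
          rw [Finset.sum_add_distrib, Finset.sum_const, Finset.card_range,
            Finset.sum_ite_eq' (Finset.range (2*m+1)) t0.toNat (fun _ => g - h), if_pos hmem]
          push_cast
          ring
      _ = g + 2*m*h := by ring
  · rw [if_neg h4]
    have hall : ∀ t ∈ Finset.range (2*m+1), ¬ ((q+1:ℕ):ℤ) ∣ (a + 4*t) := by
      intro t ht hc
      exact h4 (by
        have h44 := dvd_q1_of hm hc
        omega)
    calc ∑ t ∈ Finset.range (2*m+1), (if ((q+1:ℕ):ℤ) ∣ (a + 4*t) then g else h)
        = ∑ t ∈ Finset.range (2*m+1), h := by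
          exact Finset.sum_congr rfl (fun t ht => if_neg (hall t ht))
      _ = (2*m+1)*h := by
          rw [Finset.sum_const, Finset.card_range]
          push_cast
          ring

end S6

/-- indicator -/
def ind (q : ℕ) (z : ℤ) : ℤ := if ((q+1:ℕ):ℤ) ∣ z then 1 else 0

section S7
variable {q m : ℕ} {F : Type*} [Field F] [Fintype F] {ω : F}

lemma ind_nonneg (z : ℤ) : 0 ≤ ind q z := by unfold ind; split_ifs <;> omega
lemma ind_le_one (z : ℤ) : ind q z ≤ 1 := by unfold ind; split_ifs <;> omega

lemma CL_disjoint (hω0 : ω ≠ 0) (hord : orderOf ω = q ^ 2 - 1) (hm : q = 8*m+3)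
    {a b : ℤ} (h : ¬ (4:ℤ) ∣ (a - b)) :
    Disjoint (cyc ω 8 a) (cyc ω (q+1) b) := by
  rw [Set.disjoint_left]
  rintro z ⟨k, rfl⟩ hz
  rw [cyc_pow_mem hω0 hord (qdvd hm)] at hz
  have h4 := dvd_q1_of hm hz
  omega

lemma dvd_shift_iff {d A B : ℤ} (h : d ∣ (A - B)) : (d ∣ A) ↔ (d ∣ B) := by
  constructor
  · intro hA
    have := dvd_sub hA h
    rwa [sub_sub_cancel] at this
  · intro hB
    have := dvd_add hB h
    rwa [add_sub_cancel] at this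

lemma LL_master (hω0 : ω ≠ 0) (hord : orderOf ω = q ^ 2 - 1) (hm : q = 8*m+3)
    (hω : ∀ x : F, x ≠ 0 → ∃ k : ℕ, x = ω ^ k)
    (hq : IsPrimePow q) (hF : Fintype.card F = q^2) (a b : ℤ) {x : F} (hx : x ≠ 0)
    (e : ℕ) (he : x = ω ^ e) :
    (diffCount (cyc ω (q+1) a) (cyc ω (q+1) b) x : ℤ)
      = if ((q+1:ℕ):ℤ) ∣ (a-b)
        then (if ((q+1:ℕ):ℤ) ∣ ((e:ℤ)-b) then (q:ℤ)-2 else 0)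
        else (1 - ind q ((e:ℤ)-a) - ind q ((e:ℤ)-b)) := by
  have hmem : ∀ c : ℤ, x ∈ cyc ω (q+1) c ↔ ((q+1:ℕ):ℤ) ∣ ((e:ℤ)-c) := by
    intro c
    rw [he]
    exact cyc_mem_iff hω0 hord (qdvd hm) c e
  by_cases hd : ((q+1:ℕ):ℤ) ∣ (a-b)
  · rw [if_pos hd]
    have hab : cyc ω (q+1) a = cyc ω (q+1) b := cyc_eq hd
    rw [hab, LL_same hω0 hord hm hω hq hF b hx]
    by_cases hxb : x ∈ cyc ω (q+1) b
    · rw [if_pos hxb, if_pos ((hmem b).1 hxb)]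
      have : 2 ≤ q := by omega
      push_cast [Nat.cast_sub this]
      ring
    · rw [if_neg hxb, if_neg (fun hc => hxb ((hmem b).2 hc))]
      norm_num
  · rw [if_neg hd, LL_diff hω0 hord hm hω hq hF hd hx]
    unfold ind
    by_cases h1 : x ∈ cyc ω (q+1) a
    · have h1' := (hmem a).1 h1
      have h2' : ¬ ((q+1:ℕ):ℤ) ∣ ((e:ℤ)-b) := by
        intro hc
        exact hd (by
          have := dvd_sub h1' hc
          rwa [show (e:ℤ)-a - ((e:ℤ)-b) = -(a-b) by ring, dvd_neg] at this)
      rw [if_pos (Or.inl h1), if_pos h1', if_neg h2']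
      ring
    · by_cases h2 : x ∈ cyc ω (q+1) b
      · rw [if_pos (Or.inr h2), if_neg (fun hc => h1 ((hmem a).2 hc)),
          if_pos ((hmem b).1 h2)]
        ring
      · rw [if_neg (by tauto), if_neg (fun hc => h1 ((hmem a).2 hc)),
          if_neg (fun hc => h2 ((hmem b).2 hc))]
        ring

lemma pair_eval (hω0 : ω ≠ 0) (hord : orderOf ω = q ^ 2 - 1) (hm : q = 8*m+3)
    (hω : ∀ x : F, x ≠ 0 → ∃ k : ℕ, x = ω ^ k)
    (hq : IsPrimePow q) (hF : Fintype.card F = q^2) (r b : ℤ) {x : F} (hx : x ≠ 0)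
    (e : ℕ) (he : x = ω ^ e) :
    ∑ s ∈ Finset.range (2*m+1), (diffCount (cyc ω (q+1) (r+4*s)) (cyc ω (q+1) b) x : ℤ)
      = (if (4:ℤ) ∣ (r-b) then 2*m + (6*m+2)*(ind q ((e:ℤ)-b))
          else (2*m+1)*(1-(ind q ((e:ℤ)-b))))
        - (if (4:ℤ) ∣ (r-(e:ℤ)) then 1 else 0) := by
  set Eb : ℤ := ind q ((e:ℤ)-b) with hEb
  have hterm : ∀ s ∈ Finset.range (2*m+1),
      (diffCount (cyc ω (q+1) (r+4*s)) (cyc ω (q+1) b) x : ℤ)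
        = (if ((q+1:ℕ):ℤ) ∣ ((r-b) + 4*s) then (if ((q+1:ℕ):ℤ) ∣ ((e:ℤ)-b) then (q:ℤ)-2 else 0)
            else (1 - Eb))
          - (if ((q+1:ℕ):ℤ) ∣ ((r-(e:ℤ)) + 4*s) then 1 else 0)
          + (if ((q+1:ℕ):ℤ) ∣ ((r-b) + 4*s) then Eb else 0) := by
    intro s hs
    rw [LL_master hω0 hord hm hω hq hF (r+4*s) b hx e he]
    have hc1 : (r+4*s) - b = (r-b) + 4*s := by ring
    rw [hc1]
    by_cases hcond : ((q+1:ℕ):ℤ) ∣ ((r-b) + 4*s)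
    · have hiff : (((q+1:ℕ):ℤ) ∣ ((e:ℤ) - (r+4*s))) ↔ (((q+1:ℕ):ℤ) ∣ ((e:ℤ)-b)) := by
        refine dvd_shift_iff ?_
        rw [show ((e:ℤ) - (r+4*s)) - ((e:ℤ)-b) = -((r-b)+4*s) by ring, dvd_neg]
        exact hcond
      have hneg : (((q+1:ℕ):ℤ) ∣ ((r-(e:ℤ)) + 4*s)) ↔ (((q+1:ℕ):ℤ) ∣ ((e:ℤ) - (r+4*s))) := by
        rw [show ((e:ℤ) - (r+4*s)) = -((r-(e:ℤ)) + 4*s) by ring, dvd_neg]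
      rw [if_pos hcond, if_pos hcond, hEb]
      unfold ind
      rw [if_congr hneg rfl rfl, if_congr hiff rfl rfl]
      split_ifs <;> ring
    · have hneg : (((q+1:ℕ):ℤ) ∣ ((r-(e:ℤ)) + 4*s)) ↔ (((q+1:ℕ):ℤ) ∣ ((e:ℤ) - (r+4*s))) := by
        rw [show ((e:ℤ) - (r+4*s)) = -((r-(e:ℤ)) + 4*s) by ring, dvd_neg]
      rw [if_neg hcond, if_neg hcond, hEb]
      unfold ind
      rw [if_congr hneg rfl rfl]
      split_ifs <;> ring
  rw [Finset.sum_congr rfl hterm]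
  simp only [Finset.sum_add_distrib, Finset.sum_sub_distrib]
  rw [sumIte hm (r-b) _ (1 - Eb), sumIte hm (r-(e:ℤ)) 1 0, sumIte hm (r-b) Eb 0]
  have h2 : 2 ≤ q := by omega
  by_cases h4 : (4:ℤ) ∣ (r-b) <;> by_cases h5 : (4:ℤ) ∣ (r-(e:ℤ)) <;>
    simp only [if_pos, if_neg, h4, h5, if_true, if_false, hEb] <;> unfold ind <;>
    split_ifs <;> push_cast [hm] <;> ring
end S7

section S8
variable {q m : ℕ} {F : Type*} [Field F] [Fintype F] {ω : F}

lemma sum_ite_I (I : Finset ℕ) (y : ℕ) (hy : y ∈ I) (hcard : I.card = 3) (P Q : ℤ) :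
    ∑ i ∈ I, (if i = y then P else Q) = P + 2*Q := by
  have h : ∀ i ∈ I, (if i = y then P else Q) = Q + (if i = y then P - Q else 0) := by
    intro i _; split_ifs <;> ring
  rw [Finset.sum_congr rfl h, Finset.sum_add_distrib, Finset.sum_const, hcard,
    Finset.sum_ite_eq' I y (fun _ => P - Q), if_pos hy, nsmul_eq_mul]
  push_cast
  ring

lemma I_sum (hω0 : ω ≠ 0) (hord : orderOf ω = q ^ 2 - 1) (hm : q = 8*m+3)
    (hω : ∀ x : F, x ≠ 0 → ∃ k : ℕ, x = ω ^ k)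
    (hq : IsPrimePow q) (hF : Fintype.card F = q^2)
    (I : Finset ℕ) (y : ℕ) (hy : y ∈ I) (hcard : I.card = 3)
    (K1 : ∀ i ∈ I, ((4:ℤ) ∣ ((i:ℤ) - (y:ℤ))) ↔ i = y)
    (sh b : ℤ) (hb : (4:ℤ) ∣ ((y:ℤ) + sh - b)) {x : F} (hx : x ≠ 0)
    (e : ℕ) (he : x = ω ^ e) :
    ∑ i ∈ I, ∑ s ∈ Finset.range (2*m+1),
        (diffCount (cyc ω (q+1) ((i:ℤ)+sh+4*s)) (cyc ω (q+1) b) x : ℤ)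
      = 6*m+2 + 2*m*(ind q ((e:ℤ)-b))
        - ∑ i ∈ I, (if (4:ℤ) ∣ ((i:ℤ)+sh-(e:ℤ)) then 1 else 0) := by
  have hterm : ∀ i ∈ I, (∑ s ∈ Finset.range (2*m+1),
      (diffCount (cyc ω (q+1) ((i:ℤ)+sh+4*s)) (cyc ω (q+1) b) x : ℤ))
        = ((if i = y then 2*m + (6*m+2)*(ind q ((e:ℤ)-b))
            else (2*m+1)*(1-(ind q ((e:ℤ)-b)))))
          - (if (4:ℤ) ∣ ((i:ℤ)+sh-(e:ℤ)) then 1 else 0) := by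
    intro i hi
    have hpe := pair_eval hω0 hord hm hω hq hF ((i:ℤ)+sh) b hx e he
    rw [hpe]
    congr 1
    have hiff : ((4:ℤ) ∣ ((i:ℤ)+sh-b)) ↔ i = y := by
      rw [← K1 i hi]
      constructor <;> intro h <;> omega
    rw [if_congr hiff rfl rfl]
  rw [Finset.sum_congr rfl hterm, Finset.sum_sub_distrib]
  congr 1
  rw [sum_ite_I I y hy hcard]
  unfold ind
  split_ifs <;> push_cast [hm] <;> ring

lemma diff_expand (hω0 : ω ≠ 0) (hord : orderOf ω = q ^ 2 - 1) (hm : q = 8*m+3)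
    (I : Finset ℕ) (x : F) (a a' : ℕ → ℤ) (b b' : ℕ → ℤ)
    (haa : ∀ i ∈ I, ∀ j ∈ I, i ≠ j → ¬ (8:ℤ) ∣ (a i - a j))
    (haa' : ∀ i ∈ I, ∀ j ∈ I, i ≠ j → ¬ (8:ℤ) ∣ (a' i - a' j))
    (hbb : ∀ t ∈ Finset.range m, ∀ t' ∈ Finset.range m, t ≠ t' →
      ¬ ((q+1:ℕ):ℤ) ∣ (b t - b t'))
    (hbb' : ∀ t ∈ Finset.range m, ∀ t' ∈ Finset.range m, t ≠ t' →
      ¬ ((q+1:ℕ):ℤ) ∣ (b' t - b' t'))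
    (hab : ∀ i ∈ I, ∀ t ∈ Finset.range m, ¬ (4:ℤ) ∣ (a i - b t))
    (hab' : ∀ i ∈ I, ∀ t ∈ Finset.range m, ¬ (4:ℤ) ∣ (a' i - b' t)) :
    diffCount ((⋃ i ∈ I, cyc ω 8 (a i)) ∪ ⋃ t ∈ Finset.range m, cyc ω (q+1) (b t))
              ((⋃ i ∈ I, cyc ω 8 (a' i)) ∪ ⋃ t ∈ Finset.range m, cyc ω (q+1) (b' t)) x
      = (∑ i ∈ I, ∑ j ∈ I, diffCount (cyc ω 8 (a i)) (cyc ω 8 (a' j)) x)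
        + (∑ i ∈ I, ∑ t ∈ Finset.range m, diffCount (cyc ω 8 (a i)) (cyc ω (q+1) (b' t)) x)
        + (∑ t ∈ Finset.range m, ∑ j ∈ I, diffCount (cyc ω (q+1) (b t)) (cyc ω 8 (a' j)) x)
        + (∑ t ∈ Finset.range m, ∑ t' ∈ Finset.range m,
            diffCount (cyc ω (q+1) (b t)) (cyc ω (q+1) (b' t')) x) := by
  have hd1 : Disjoint (⋃ i ∈ I, cyc ω 8 (a i)) (⋃ t ∈ Finset.range m, cyc ω (q+1) (b t)) := by
    simp only [Set.disjoint_iUnion_left, Set.disjoint_iUnion_right]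
    intro t ht i hi
    exact CL_disjoint hω0 hord hm (hab i hi t ht)
  have hd2 : Disjoint (⋃ i ∈ I, cyc ω 8 (a' i)) (⋃ t ∈ Finset.range m, cyc ω (q+1) (b' t)) := by
    simp only [Set.disjoint_iUnion_left, Set.disjoint_iUnion_right]
    intro t ht i hi
    exact CL_disjoint hω0 hord hm (hab' i hi t ht)
  rw [diffCount_union_left hd1, diffCount_union_right hd2, diffCount_union_right hd2,
    diffCount_biUnion_left I _ _ x
      (fun i hi j hj hne => cyc_disjoint hω0 hord (dvd8 hm) (haa i hi j hj hne)),
    diffCount_biUnion_left (Finset.range m) _ _ x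
      (fun t ht t' ht' hne => cyc_disjoint hω0 hord (qdvd hm) (hbb t ht t' ht' hne)),
    diffCount_biUnion_left I _ _ x
      (fun i hi j hj hne => cyc_disjoint hω0 hord (dvd8 hm) (haa i hi j hj hne)),
    diffCount_biUnion_left (Finset.range m) _ _ x
      (fun t ht t' ht' hne => cyc_disjoint hω0 hord (qdvd hm) (hbb t ht t' ht' hne))]
  have E1 : ∑ i ∈ I, diffCount (cyc ω 8 (a i)) (⋃ j ∈ I, cyc ω 8 (a' j)) x
      = ∑ i ∈ I, ∑ j ∈ I, diffCount (cyc ω 8 (a i)) (cyc ω 8 (a' j)) x :=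
    Finset.sum_congr rfl (fun i hi => diffCount_biUnion_right I _ _ x
      (fun i' hi' j hj hne => cyc_disjoint hω0 hord (dvd8 hm) (haa' i' hi' j hj hne)))
  have E2 : ∑ i ∈ I, diffCount (cyc ω 8 (a i)) (⋃ t ∈ Finset.range m, cyc ω (q+1) (b' t)) x
      = ∑ i ∈ I, ∑ t ∈ Finset.range m, diffCount (cyc ω 8 (a i)) (cyc ω (q+1) (b' t)) x :=
    Finset.sum_congr rfl (fun i hi => diffCount_biUnion_right (Finset.range m) _ _ x
      (fun t ht t' ht' hne => cyc_disjoint hω0 hord (qdvd hm) (hbb' t ht t' ht' hne)))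
  have E3 : ∑ t ∈ Finset.range m, diffCount (cyc ω (q+1) (b t)) (⋃ j ∈ I, cyc ω 8 (a' j)) x
      = ∑ t ∈ Finset.range m, ∑ j ∈ I, diffCount (cyc ω (q+1) (b t)) (cyc ω 8 (a' j)) x :=
    Finset.sum_congr rfl (fun t ht => diffCount_biUnion_right I _ _ x
      (fun i hi j hj hne => cyc_disjoint hω0 hord (dvd8 hm) (haa' i hi j hj hne)))
  have E4 : ∑ t ∈ Finset.range m, diffCount (cyc ω (q+1) (b t))
        (⋃ t' ∈ Finset.range m, cyc ω (q+1) (b' t')) x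
      = ∑ t ∈ Finset.range m, ∑ t' ∈ Finset.range m,
          diffCount (cyc ω (q+1) (b t)) (cyc ω (q+1) (b' t')) x :=
    Finset.sum_congr rfl (fun t ht => diffCount_biUnion_right (Finset.range m) _ _ x
      (fun t1 ht1 t2 ht2 hne => cyc_disjoint hω0 hord (qdvd hm) (hbb' t1 ht1 t2 ht2 hne)))
  rw [E1, E2, E3, E4]
  ring

end S8

section S9
variable {q m : ℕ} {F : Type*} [Field F] [Fintype F] {ω : F}

/-- grouped cross-term evaluation, x ≠ 0 -/
lemma group_sum (hω0 : ω ≠ 0) (hord : orderOf ω = q ^ 2 - 1) (hm : q = 8*m+3)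
    (hω : ∀ x : F, x ≠ 0 → ∃ k : ℕ, x = ω ^ k)
    (hq : IsPrimePow q) (hF : Fintype.card F = q^2)
    (I : Finset ℕ) (y : ℕ) (hy : y ∈ I) (hcard : I.card = 3)
    (r : ℕ → ℤ) (bf : ℕ → ℤ)
    (hK : ∀ i ∈ I, ∀ t < m, ((4:ℤ) ∣ (r i - bf t)) ↔ i = y)
    {x : F} (hx : x ≠ 0) (e : ℕ) (he : x = ω ^ e) :
    ∑ i ∈ I, ∑ t ∈ Finset.range m, ∑ s ∈ Finset.range (2*m+1),
        (diffCount (cyc ω (q+1) (r i + 4*s)) (cyc ω (q+1) (bf t)) x : ℤ)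
      = m*(6*m+2) + 2*m*(∑ t ∈ Finset.range m, ind q ((e:ℤ) - bf t))
        - m * (∑ i ∈ I, if (4:ℤ) ∣ (r i - (e:ℤ)) then 1 else 0) := by
  rw [Finset.sum_comm]
  have hstep : ∀ t ∈ Finset.range m,
      (∑ i ∈ I, ∑ s ∈ Finset.range (2*m+1),
        (diffCount (cyc ω (q+1) (r i + 4*s)) (cyc ω (q+1) (bf t)) x : ℤ))
      = 6*m+2 + 2*m*(ind q ((e:ℤ) - bf t))
        - ∑ i ∈ I, (if (4:ℤ) ∣ (r i - (e:ℤ)) then 1 else 0) := by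
    intro t ht
    rw [Finset.mem_range] at ht
    have hterm : ∀ i ∈ I, (∑ s ∈ Finset.range (2*m+1),
        (diffCount (cyc ω (q+1) (r i + 4*s)) (cyc ω (q+1) (bf t)) x : ℤ))
          = ((if i = y then 2*m + (6*m+2)*(ind q ((e:ℤ)-(bf t)))
              else (2*m+1)*(1-(ind q ((e:ℤ)-(bf t))))))
            - (if (4:ℤ) ∣ (r i - (e:ℤ)) then 1 else 0) := by
      intro i hi
      rw [pair_eval hω0 hord hm hω hq hF (r i) (bf t) hx e he]
      congr 1
      rw [if_congr (hK i hi t ht) rfl rfl]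
    rw [Finset.sum_congr rfl hterm, Finset.sum_sub_distrib]
    congr 1
    rw [sum_ite_I I y hy hcard]
    unfold ind
    split_ifs <;> push_cast [hm] <;> ring
  rw [Finset.sum_congr rfl hstep]
  simp only [Finset.sum_sub_distrib, Finset.sum_add_distrib, Finset.sum_const,
    Finset.card_range, nsmul_eq_mul, ← Finset.mul_sum]
  ring

/-- grouped cross-term evaluation, x = 0 -/
lemma pair_zero (hω0 : ω ≠ 0) (hord : orderOf ω = q ^ 2 - 1) (hm : q = 8*m+3) (r b : ℤ) :
    ∑ s ∈ Finset.range (2*m+1),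
        (diffCount (cyc ω (q+1) (r+4*s)) (cyc ω (q+1) b) (0:F) : ℤ)
      = if (4:ℤ) ∣ (r-b) then (q:ℤ)-1 else 0 := by
  have hterm : ∀ s ∈ Finset.range (2*m+1),
      (diffCount (cyc ω (q+1) (r+4*s)) (cyc ω (q+1) b) (0:F) : ℤ)
        = if ((q+1:ℕ):ℤ) ∣ ((r-b) + 4*s) then (q:ℤ)-1 else 0 := by
    intro s hs
    rw [LL_zero hω0 hord hm, apply_ite (fun n : ℕ => (n:ℤ)),
      show (r+4*(s:ℤ)) - b = (r-b)+4*s from by ring]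
    split_ifs with h
    · rw [Nat.cast_sub (by omega : 1 ≤ q)]
      norm_num
    · norm_num
  rw [Finset.sum_congr rfl hterm, sumIte hm (r-b) ((q:ℤ)-1) 0]
  split_ifs <;> ring

lemma group_zero (hω0 : ω ≠ 0) (hord : orderOf ω = q ^ 2 - 1) (hm : q = 8*m+3)
    (I : Finset ℕ) (y : ℕ) (hy : y ∈ I) (hcard : I.card = 3)
    (r : ℕ → ℤ) (bf : ℕ → ℤ)
    (hK : ∀ i ∈ I, ∀ t < m, ((4:ℤ) ∣ (r i - bf t)) ↔ i = y) :
    ∑ i ∈ I, ∑ t ∈ Finset.range m, ∑ s ∈ Finset.range (2*m+1),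
        (diffCount (cyc ω (q+1) (r i + 4*s)) (cyc ω (q+1) (bf t)) (0:F) : ℤ)
      = m*((q:ℤ)-1) := by
  rw [Finset.sum_comm]
  have hstep : ∀ t ∈ Finset.range m,
      (∑ i ∈ I, ∑ s ∈ Finset.range (2*m+1),
        (diffCount (cyc ω (q+1) (r i + 4*s)) (cyc ω (q+1) (bf t)) (0:F) : ℤ))
      = (q:ℤ)-1 := by
    intro t ht
    rw [Finset.mem_range] at ht
    have hterm : ∀ i ∈ I, (∑ s ∈ Finset.range (2*m+1),
        (diffCount (cyc ω (q+1) (r i + 4*s)) (cyc ω (q+1) (bf t)) (0:F) : ℤ))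
          = if i = y then (q:ℤ)-1 else 0 := by
      intro i hi
      rw [pair_zero hω0 hord hm (r i) (bf t), if_congr (hK i hi t ht) rfl rfl]
    rw [Finset.sum_congr rfl hterm, Finset.sum_ite_eq' I y (fun _ => (q:ℤ)-1), if_pos hy]
  rw [Finset.sum_congr rfl hstep, Finset.sum_const, Finset.card_range, nsmul_eq_mul]

/-- LL-group, x ≠ 0 -/
lemma LL_group (hω0 : ω ≠ 0) (hord : orderOf ω = q ^ 2 - 1) (hm : q = 8*m+3)
    (hω : ∀ x : F, x ≠ 0 → ∃ k : ℕ, x = ω ^ k)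
    (hq : IsPrimePow q) (hF : Fintype.card F = q^2)
    (bf bf' : ℕ → ℤ) (hne : ∀ t < m, ∀ t' < m, ¬ ((q+1:ℕ):ℤ) ∣ (bf t - bf' t'))
    {x : F} (hx : x ≠ 0) (e : ℕ) (he : x = ω ^ e) :
    ∑ t ∈ Finset.range m, ∑ t' ∈ Finset.range m,
        (diffCount (cyc ω (q+1) (bf t)) (cyc ω (q+1) (bf' t')) x : ℤ)
      = m*m - m*(∑ t ∈ Finset.range m, ind q ((e:ℤ) - bf t))
        - m*(∑ t ∈ Finset.range m, ind q ((e:ℤ) - bf' t)) := by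
  have hstep : ∀ t ∈ Finset.range m,
      (∑ t' ∈ Finset.range m,
        (diffCount (cyc ω (q+1) (bf t)) (cyc ω (q+1) (bf' t')) x : ℤ))
      = m*(1 - ind q ((e:ℤ) - bf t)) - ∑ t' ∈ Finset.range m, ind q ((e:ℤ) - bf' t') := by
    intro t ht
    rw [Finset.mem_range] at ht
    have hterm : ∀ t' ∈ Finset.range m,
        (diffCount (cyc ω (q+1) (bf t)) (cyc ω (q+1) (bf' t')) x : ℤ)
          = (1 - ind q ((e:ℤ) - bf t)) - ind q ((e:ℤ) - bf' t') := by
      intro t' ht'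
      rw [Finset.mem_range] at ht'
      rw [LL_master hω0 hord hm hω hq hF (bf t) (bf' t') hx e he,
        if_neg (hne t ht t' ht')]
    rw [Finset.sum_congr rfl hterm]
    simp only [Finset.sum_sub_distrib, Finset.sum_const, Finset.card_range, nsmul_eq_mul]
    ring
  rw [Finset.sum_congr rfl hstep]
  simp only [Finset.sum_sub_distrib, Finset.sum_const, Finset.card_range, nsmul_eq_mul,
    ← Finset.mul_sum]
  ring

/-- LL-group, x = 0 -/
lemma LL_group_zero (hω0 : ω ≠ 0) (hord : orderOf ω = q ^ 2 - 1) (hm : q = 8*m+3)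
    (bf bf' : ℕ → ℤ) (hne : ∀ t < m, ∀ t' < m, ¬ ((q+1:ℕ):ℤ) ∣ (bf t - bf' t')) :
    ∑ t ∈ Finset.range m, ∑ t' ∈ Finset.range m,
        (diffCount (cyc ω (q+1) (bf t)) (cyc ω (q+1) (bf' t')) (0:F) : ℤ)
      = 0 := by
  rw [Finset.sum_eq_zero]
  intro t ht
  rw [Finset.mem_range] at ht
  rw [Finset.sum_eq_zero]
  intro t' ht'
  rw [Finset.mem_range] at ht'
  rw [LL_zero hω0 hord hm, if_neg (hne t ht t' ht')]
  norm_num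

end S9

section S10
variable {q m : ℕ} {F : Type*} [Field F] [Fintype F] {ω : F}

lemma bb_help (hm : q = 8*m+3) {t t' : ℕ} (ht : t < m) (ht' : t' < m) (hne : t ≠ t')
    {z : ℤ} (hz : z = 4*((t:ℤ) - t')) : ¬ ((q+1:ℕ):ℤ) ∣ z := by
  intro hd
  rw [hz] at hd
  exact hne (q1_dvd_four_iff hm (by omega) (by omega) hd)

lemma bb_help2 (hm : q = 8*m+3) {z : ℤ} (hz : ∃ w : ℤ, z = 2 + 4*w) :
    ¬ ((q+1:ℕ):ℤ) ∣ z := by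
  intro hd
  obtain ⟨w, rfl⟩ := hz
  have := dvd_q1_of hm hd
  omega

end S10


theorem stmt_11 (q m : ℕ) (hq : IsPrimePow q) (hm : q = 8 * m + 3)
    (F : Type*) [Field F] [Fintype F] (hF : Fintype.card F = q ^ 2)
    (ω : F) (hω : ∀ x : F, x ≠ 0 → ∃ k : ℕ, x = ω ^ k)
    (I : Finset ℕ) (hI : I ⊆ Finset.range 8) (hIcard : I.card = 3)
    (y : ℕ) (hy : y ∈ I)
    (hyuniq : I.filter (fun z => Odd z) = {y} ∨ I.filter (fun z => Even z) = {y}) :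
    let L : ℕ → Set F := fun i => cyc ω (q + 1) i
    let J₁ : Finset ℕ := (Finset.range m).image fun i => (y + 2 + 4 * i) % (q + 1)
    let J₂ : Finset ℕ := (Finset.range m).image fun i => (y + 4 * i) % (q + 1)
    let E₀ : Set F := (⋃ i ∈ I, cyc ω 8 i) ∪ ⋃ j ∈ J₁, L j
    let E₁ : Set F := (⋃ i ∈ I, cyc ω 8 (i + 2)) ∪ ⋃ j ∈ J₂, L j
    let E₂ : Set F := (⋃ i ∈ I, cyc ω 8 (i + 1)) ∪ ⋃ j ∈ J₁, L (j + 1)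
    let E₃ : Set F := (⋃ i ∈ I, cyc ω 8 (i + 3)) ∪ ⋃ j ∈ J₂, L (j + 1)
    ∀ x : F,
      (x = 0 →
        diffCount E₀ E₁ x + diffCount E₁ E₀ x + diffCount E₂ E₃ x + diffCount E₃ E₂ x
          = (∑ h ∈ Finset.range 2, ∑ i ∈ I, ∑ j ∈ I,
              (diffCount (cyc ω 8 (i + h)) (cyc ω 8 (j + 2 + h)) x
                + diffCount (cyc ω 8 (i + 2 + h)) (cyc ω 8 (j + h)) x))
            + 8 * m * (4 * m + 1)) ∧
      (x ≠ 0 →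
        diffCount E₀ E₁ x + diffCount E₁ E₀ x + diffCount E₂ E₃ x + diffCount E₃ E₂ x
          = (∑ h ∈ Finset.range 2, ∑ i ∈ I, ∑ j ∈ I,
              (diffCount (cyc ω 8 (i + h)) (cyc ω 8 (j + 2 + h)) x
                + diffCount (cyc ω 8 (i + 2 + h)) (cyc ω 8 (j + h)) x))
            + m * (28 * m + 5)) := by
  intro L J₁ J₂ E₀ E₁ E₂ E₃ x
  -- basic facts
  have hq3 : 3 ≤ q := by omega
  have hω0 : ω ≠ 0 := by
    intro h0
    have hcard3 : 3 ≤ Fintype.card F := by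
      rw [hF]
      nlinarith
    have hsub : (Finset.univ : Finset F) ⊆ {0, 1} := by
      intro z _
      rcases eq_or_ne z 0 with rfl | hz
      · simp
      · obtain ⟨k, hk⟩ := hω z hz
        rcases Nat.eq_zero_or_pos k with rfl | hk0
        · simp [hk]
        · rw [h0, zero_pow (by omega)] at hk
          exact absurd hk hz
    have := Finset.card_le_card hsub
    have h2 : ({0, 1} : Finset F).card ≤ 2 := Finset.card_insert_le _ _ |>.trans (by simp)
    simp only [Finset.card_univ] at this
    omega
  have hord : orderOf ω = q ^ 2 - 1 := by
    have hmem : ∀ w : Fˣ, w ∈ Subgroup.zpowers (Units.mk0 ω hω0) := by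
      intro w
      obtain ⟨k, hk⟩ := hω (w : F) (Units.ne_zero w)
      refine ⟨(k : ℤ), ?_⟩
      ext
      rw [Units.val_zpow_eq_zpow_val]
      simp [hk]
    have h1 : orderOf (Units.mk0 ω hω0) = Fintype.card Fˣ :=
      (orderOf_eq_card_of_forall_mem_zpowers hmem).trans Nat.card_eq_fintype_card
    have h2 : orderOf ((Units.mk0 ω hω0 : Fˣ) : F) = orderOf (Units.mk0 ω hω0) :=
      orderOf_units
    rw [show ((Units.mk0 ω hω0 : Fˣ) : F) = ω from rfl] at h2
    rw [h2, h1, Fintype.card_units, hF]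
  -- parity facts
  have hy8 : y < 8 := Finset.mem_range.1 (hI hy)
  have hpar : ∀ i ∈ I, i ≠ y → i % 2 ≠ y % 2 := by
    rcases hyuniq with h | h
    · have hyodd : Odd y := by
        have : y ∈ I.filter (fun z => Odd z) := h ▸ Finset.mem_singleton_self y
        exact (Finset.mem_filter.1 this).2
      intro i hi hne hp
      have : Odd i := by
        rw [Nat.odd_iff] at hyodd ⊢
        omega
      have : i ∈ I.filter (fun z => Odd z) := Finset.mem_filter.2 ⟨hi, this⟩
      rw [h, Finset.mem_singleton] at this
      exact hne this
    · have hyev : Even y := by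
        have : y ∈ I.filter (fun z => Even z) := h ▸ Finset.mem_singleton_self y
        exact (Finset.mem_filter.1 this).2
      intro i hi hne hp
      have : Even i := by
        rw [Nat.even_iff] at hyev ⊢
        omega
      have : i ∈ I.filter (fun z => Even z) := Finset.mem_filter.2 ⟨hi, this⟩
      rw [h, Finset.mem_singleton] at this
      exact hne this
  have K1 : ∀ i ∈ I, ((4:ℤ) ∣ ((i:ℤ) - (y:ℤ))) ↔ i = y := by
    intro i hi
    constructor
    · intro h4
      by_contra hne
      have := hpar i hi hne
      omega
    · rintro rfl
      exact ⟨0, by ring⟩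
  have K2 : ∀ i ∈ I, ¬ (4:ℤ) ∣ ((i:ℤ) - (y:ℤ) - 2) := by
    intro i hi h4
    rcases eq_or_ne i y with rfl | hne
    · omega
    · have := hpar i hi hne
      omega
  -- E set rewrites
  have hC0 : (⋃ i ∈ I, cyc ω 8 ((i:ℕ):ℤ)) = ⋃ i ∈ I, cyc ω 8 ((i:ℤ)+0) :=
    Set.iUnion₂_congr fun i _ => by rw [add_zero]
  have hC3 : (⋃ i ∈ I, cyc ω 8 ((i:ℤ)+3)) = ⋃ i ∈ I, cyc ω 8 ((i:ℤ)+2+1) :=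
    Set.iUnion₂_congr fun i _ => by rw [show ((i:ℤ)+2+1) = (i:ℤ)+3 from by ring]
  have hC1 : (⋃ i ∈ I, cyc ω 8 ((i:ℤ)+2)) = ⋃ i ∈ I, cyc ω 8 ((i:ℤ)+2+0) :=
    Set.iUnion₂_congr fun i _ => by rw [add_zero]
  have hJA : (⋃ j ∈ J₁, cyc ω (q+1) ((j:ℕ):ℤ))
      = ⋃ t ∈ Finset.range m, cyc ω (q+1) ((y:ℤ)+2+4*(t:ℤ)) := by
    ext z
    simp only [Set.mem_iUnion, Finset.mem_image, Finset.mem_range, exists_prop, J₁]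
    constructor
    · rintro ⟨j, ⟨t, ht, rfl⟩, hz⟩
      refine ⟨t, ht, ?_⟩
      rwa [Nat.mod_eq_of_lt (by omega),
        show ((y+2+4*t : ℕ):ℤ) = (y:ℤ)+2+4*(t:ℤ) from by push_cast; ring] at hz
    · rintro ⟨t, ht, hz⟩
      refine ⟨(y+2+4*t) % (q+1), ⟨t, ht, rfl⟩, ?_⟩
      rwa [Nat.mod_eq_of_lt (by omega),
        show ((y+2+4*t : ℕ):ℤ) = (y:ℤ)+2+4*(t:ℤ) from by push_cast; ring]
  have hJB : (⋃ j ∈ J₂, cyc ω (q+1) ((j:ℕ):ℤ))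
      = ⋃ t ∈ Finset.range m, cyc ω (q+1) ((y:ℤ)+4*(t:ℤ)) := by
    ext z
    simp only [Set.mem_iUnion, Finset.mem_image, Finset.mem_range, exists_prop, J₂]
    constructor
    · rintro ⟨j, ⟨t, ht, rfl⟩, hz⟩
      refine ⟨t, ht, ?_⟩
      rwa [Nat.mod_eq_of_lt (by omega),
        show ((y+4*t : ℕ):ℤ) = (y:ℤ)+4*(t:ℤ) from by push_cast; ring] at hz
    · rintro ⟨t, ht, hz⟩
      refine ⟨(y+4*t) % (q+1), ⟨t, ht, rfl⟩, ?_⟩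
      rwa [Nat.mod_eq_of_lt (by omega),
        show ((y+4*t : ℕ):ℤ) = (y:ℤ)+4*(t:ℤ) from by push_cast; ring]
  have hJA1 : (⋃ j ∈ J₁, cyc ω (q+1) ((j+1 : ℕ):ℤ))
      = ⋃ t ∈ Finset.range m, cyc ω (q+1) ((y:ℤ)+2+4*(t:ℤ)+1) := by
    ext z
    simp only [Set.mem_iUnion, Finset.mem_image, Finset.mem_range, exists_prop, J₁]
    constructor
    · rintro ⟨j, ⟨t, ht, rfl⟩, hz⟩
      refine ⟨t, ht, ?_⟩
      rwa [Nat.mod_eq_of_lt (by omega),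
        show ((y+2+4*t+1 : ℕ):ℤ) = (y:ℤ)+2+4*(t:ℤ)+1 from by push_cast; ring] at hz
    · rintro ⟨t, ht, hz⟩
      refine ⟨(y+2+4*t) % (q+1), ⟨t, ht, rfl⟩, ?_⟩
      rwa [Nat.mod_eq_of_lt (by omega),
        show ((y+2+4*t+1 : ℕ):ℤ) = (y:ℤ)+2+4*(t:ℤ)+1 from by push_cast; ring]
  have hJB1 : (⋃ j ∈ J₂, cyc ω (q+1) ((j+1 : ℕ):ℤ))
      = ⋃ t ∈ Finset.range m, cyc ω (q+1) ((y:ℤ)+4*(t:ℤ)+1) := by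
    ext z
    simp only [Set.mem_iUnion, Finset.mem_image, Finset.mem_range, exists_prop, J₂]
    constructor
    · rintro ⟨j, ⟨t, ht, rfl⟩, hz⟩
      refine ⟨t, ht, ?_⟩
      rwa [Nat.mod_eq_of_lt (by omega),
        show ((y+4*t+1 : ℕ):ℤ) = (y:ℤ)+4*(t:ℤ)+1 from by push_cast; ring] at hz
    · rintro ⟨t, ht, hz⟩
      refine ⟨(y+4*t) % (q+1), ⟨t, ht, rfl⟩, ?_⟩
      rwa [Nat.mod_eq_of_lt (by omega),
        show ((y+4*t+1 : ℕ):ℤ) = (y:ℤ)+4*(t:ℤ)+1 from by push_cast; ring]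
  have hE0 : E₀ = (⋃ i ∈ I, cyc ω 8 ((i:ℤ)+0))
      ∪ ⋃ t ∈ Finset.range m, cyc ω (q+1) ((y:ℤ)+2+4*(t:ℤ)) := by
    show ((⋃ i ∈ I, cyc ω 8 ((i:ℕ):ℤ)) ∪ ⋃ j ∈ J₁, cyc ω (q+1) ((j:ℕ):ℤ)) = _
    rw [hC0, hJA]
  have hE1 : E₁ = (⋃ i ∈ I, cyc ω 8 ((i:ℤ)+2+0))
      ∪ ⋃ t ∈ Finset.range m, cyc ω (q+1) ((y:ℤ)+4*(t:ℤ)) := by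
    show ((⋃ i ∈ I, cyc ω 8 ((i:ℤ)+2)) ∪ ⋃ j ∈ J₂, cyc ω (q+1) ((j:ℕ):ℤ)) = _
    rw [hC1, hJB]
  have hE2 : E₂ = (⋃ i ∈ I, cyc ω 8 ((i:ℤ)+1))
      ∪ ⋃ t ∈ Finset.range m, cyc ω (q+1) ((y:ℤ)+2+4*(t:ℤ)+1) := by
    show ((⋃ i ∈ I, cyc ω 8 ((i:ℤ)+1)) ∪ ⋃ j ∈ J₁, cyc ω (q+1) ((j+1 : ℕ):ℤ)) = _
    rw [hJA1]
  have hE3 : E₃ = (⋃ i ∈ I, cyc ω 8 ((i:ℤ)+2+1))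
      ∪ ⋃ t ∈ Finset.range m, cyc ω (q+1) ((y:ℤ)+4*(t:ℤ)+1) := by
    show ((⋃ i ∈ I, cyc ω 8 ((i:ℤ)+3)) ∪ ⋃ j ∈ J₂, cyc ω (q+1) ((j+1 : ℕ):ℤ)) = _
    rw [hC3, hJB1]
  -- expansions
  have haa0 : ∀ i ∈ I, ∀ j ∈ I, i ≠ j → ¬ (8:ℤ) ∣ (((i:ℤ)+0) - ((j:ℤ)+0)) := by
    intro i hi j hj hne
    have h1 := Finset.mem_range.1 (hI hi)
    have h2 := Finset.mem_range.1 (hI hj)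
    omega
  have haa1 : ∀ i ∈ I, ∀ j ∈ I, i ≠ j → ¬ (8:ℤ) ∣ (((i:ℤ)+2+0) - ((j:ℤ)+2+0)) := by
    intro i hi j hj hne
    have h1 := Finset.mem_range.1 (hI hi)
    have h2 := Finset.mem_range.1 (hI hj)
    omega
  have haa2 : ∀ i ∈ I, ∀ j ∈ I, i ≠ j → ¬ (8:ℤ) ∣ (((i:ℤ)+1) - ((j:ℤ)+1)) := by
    intro i hi j hj hne
    have h1 := Finset.mem_range.1 (hI hi)
    have h2 := Finset.mem_range.1 (hI hj)
    omega
  have haa3 : ∀ i ∈ I, ∀ j ∈ I, i ≠ j → ¬ (8:ℤ) ∣ (((i:ℤ)+2+1) - ((j:ℤ)+2+1)) := by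
    intro i hi j hj hne
    have h1 := Finset.mem_range.1 (hI hi)
    have h2 := Finset.mem_range.1 (hI hj)
    omega
  have hbbA : ∀ t ∈ Finset.range m, ∀ t' ∈ Finset.range m, t ≠ t' →
      ¬ ((q+1:ℕ):ℤ) ∣ (((y:ℤ)+2+4*(t:ℤ)) - ((y:ℤ)+2+4*(t':ℤ))) := fun t ht t' ht' hne =>
    bb_help hm (Finset.mem_range.1 ht) (Finset.mem_range.1 ht') hne (by ring)
  have hbbB : ∀ t ∈ Finset.range m, ∀ t' ∈ Finset.range m, t ≠ t' →
      ¬ ((q+1:ℕ):ℤ) ∣ (((y:ℤ)+4*(t:ℤ)) - ((y:ℤ)+4*(t':ℤ))) := fun t ht t' ht' hne =>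
    bb_help hm (Finset.mem_range.1 ht) (Finset.mem_range.1 ht') hne (by ring)
  have hbbA1 : ∀ t ∈ Finset.range m, ∀ t' ∈ Finset.range m, t ≠ t' →
      ¬ ((q+1:ℕ):ℤ) ∣ (((y:ℤ)+2+4*(t:ℤ)+1) - ((y:ℤ)+2+4*(t':ℤ)+1)) := fun t ht t' ht' hne =>
    bb_help hm (Finset.mem_range.1 ht) (Finset.mem_range.1 ht') hne (by ring)
  have hbbB1 : ∀ t ∈ Finset.range m, ∀ t' ∈ Finset.range m, t ≠ t' →
      ¬ ((q+1:ℕ):ℤ) ∣ (((y:ℤ)+4*(t:ℤ)+1) - ((y:ℤ)+4*(t':ℤ)+1)) := fun t ht t' ht' hne =>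
    bb_help hm (Finset.mem_range.1 ht) (Finset.mem_range.1 ht') hne (by ring)
  have hab0 : ∀ i ∈ I, ∀ t ∈ Finset.range m,
      ¬ (4:ℤ) ∣ (((i:ℤ)+0) - ((y:ℤ)+2+4*(t:ℤ))) := by
    intro i hi t ht
    have h2 := K2 i hi
    omega
  have hab1 : ∀ i ∈ I, ∀ t ∈ Finset.range m,
      ¬ (4:ℤ) ∣ (((i:ℤ)+2+0) - ((y:ℤ)+4*(t:ℤ))) := by
    intro i hi t ht
    have h2 := K2 i hi
    omega
  have hab2 : ∀ i ∈ I, ∀ t ∈ Finset.range m,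
      ¬ (4:ℤ) ∣ (((i:ℤ)+1) - ((y:ℤ)+2+4*(t:ℤ)+1)) := by
    intro i hi t ht
    have h2 := K2 i hi
    omega
  have hab3 : ∀ i ∈ I, ∀ t ∈ Finset.range m,
      ¬ (4:ℤ) ∣ (((i:ℤ)+2+1) - ((y:ℤ)+4*(t:ℤ)+1)) := by
    intro i hi t ht
    have h2 := K2 i hi
    omega
  have hd01 : diffCount E₀ E₁ x
      = (∑ i ∈ I, ∑ j ∈ I, diffCount (cyc ω 8 ((i:ℤ)+0)) (cyc ω 8 ((j:ℤ)+2+0)) x)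
        + (∑ i ∈ I, ∑ t ∈ Finset.range m,
            diffCount (cyc ω 8 ((i:ℤ)+0)) (cyc ω (q+1) ((y:ℤ)+4*(t:ℤ))) x)
        + (∑ t ∈ Finset.range m, ∑ j ∈ I,
            diffCount (cyc ω (q+1) ((y:ℤ)+2+4*(t:ℤ))) (cyc ω 8 ((j:ℤ)+2+0)) x)
        + (∑ t ∈ Finset.range m, ∑ t' ∈ Finset.range m,
            diffCount (cyc ω (q+1) ((y:ℤ)+2+4*(t:ℤ))) (cyc ω (q+1) ((y:ℤ)+4*(t':ℤ))) x) := by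
    rw [hE0, hE1]
    exact diff_expand hω0 hord hm I x _ _ _ _ haa0 haa1 hbbA hbbB hab0 hab1
  have hd10 : diffCount E₁ E₀ x
      = (∑ i ∈ I, ∑ j ∈ I, diffCount (cyc ω 8 ((i:ℤ)+2+0)) (cyc ω 8 ((j:ℤ)+0)) x)
        + (∑ i ∈ I, ∑ t ∈ Finset.range m,
            diffCount (cyc ω 8 ((i:ℤ)+2+0)) (cyc ω (q+1) ((y:ℤ)+2+4*(t:ℤ))) x)
        + (∑ t ∈ Finset.range m, ∑ j ∈ I,
            diffCount (cyc ω (q+1) ((y:ℤ)+4*(t:ℤ))) (cyc ω 8 ((j:ℤ)+0)) x)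
        + (∑ t ∈ Finset.range m, ∑ t' ∈ Finset.range m,
            diffCount (cyc ω (q+1) ((y:ℤ)+4*(t:ℤ))) (cyc ω (q+1) ((y:ℤ)+2+4*(t':ℤ))) x) := by
    rw [hE1, hE0]
    exact diff_expand hω0 hord hm I x _ _ _ _ haa1 haa0 hbbB hbbA hab1 hab0
  have hd23 : diffCount E₂ E₃ x
      = (∑ i ∈ I, ∑ j ∈ I, diffCount (cyc ω 8 ((i:ℤ)+1)) (cyc ω 8 ((j:ℤ)+2+1)) x)
        + (∑ i ∈ I, ∑ t ∈ Finset.range m,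
            diffCount (cyc ω 8 ((i:ℤ)+1)) (cyc ω (q+1) ((y:ℤ)+4*(t:ℤ)+1)) x)
        + (∑ t ∈ Finset.range m, ∑ j ∈ I,
            diffCount (cyc ω (q+1) ((y:ℤ)+2+4*(t:ℤ)+1)) (cyc ω 8 ((j:ℤ)+2+1)) x)
        + (∑ t ∈ Finset.range m, ∑ t' ∈ Finset.range m,
            diffCount (cyc ω (q+1) ((y:ℤ)+2+4*(t:ℤ)+1)) (cyc ω (q+1) ((y:ℤ)+4*(t':ℤ)+1)) x) := by
    rw [hE2, hE3]
    exact diff_expand hω0 hord hm I x _ _ _ _ haa2 haa3 hbbA1 hbbB1 hab2 hab3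
  have hd32 : diffCount E₃ E₂ x
      = (∑ i ∈ I, ∑ j ∈ I, diffCount (cyc ω 8 ((i:ℤ)+2+1)) (cyc ω 8 ((j:ℤ)+1)) x)
        + (∑ i ∈ I, ∑ t ∈ Finset.range m,
            diffCount (cyc ω 8 ((i:ℤ)+2+1)) (cyc ω (q+1) ((y:ℤ)+2+4*(t:ℤ)+1)) x)
        + (∑ t ∈ Finset.range m, ∑ j ∈ I,
            diffCount (cyc ω (q+1) ((y:ℤ)+4*(t:ℤ)+1)) (cyc ω 8 ((j:ℤ)+1)) x)
        + (∑ t ∈ Finset.range m, ∑ t' ∈ Finset.range m,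
            diffCount (cyc ω (q+1) ((y:ℤ)+4*(t:ℤ)+1)) (cyc ω (q+1) ((y:ℤ)+2+4*(t':ℤ)+1)) x) := by
    rw [hE3, hE2]
    exact diff_expand hω0 hord hm I x _ _ _ _ haa3 haa2 hbbB1 hbbA1 hab3 hab2
  -- pairing identities (ℤ)
  have P1 : (∑ i ∈ I, ∑ t ∈ Finset.range m,
        (diffCount (cyc ω 8 ((i:ℤ)+0)) (cyc ω (q+1) ((y:ℤ)+4*(t:ℤ))) x : ℤ))
      + (∑ t ∈ Finset.range m, ∑ j ∈ I,
        (diffCount (cyc ω (q+1) ((y:ℤ)+4*(t:ℤ))) (cyc ω 8 ((j:ℤ)+0)) x : ℤ))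
      = ∑ i ∈ I, ∑ t ∈ Finset.range m, ∑ s ∈ Finset.range (2*m+1),
        (diffCount (cyc ω (q+1) ((i:ℤ)+0+4*(s:ℤ))) (cyc ω (q+1) ((y:ℤ)+4*(t:ℤ))) x : ℤ) := by
    rw [show (∑ t ∈ Finset.range m, ∑ j ∈ I,
        (diffCount (cyc ω (q+1) ((y:ℤ)+4*(t:ℤ))) (cyc ω 8 ((j:ℤ)+0)) x : ℤ))
      = ∑ j ∈ I, ∑ t ∈ Finset.range m,
        (diffCount (cyc ω (q+1) ((y:ℤ)+4*(t:ℤ))) (cyc ω 8 ((j:ℤ)+0)) x : ℤ) from Finset.sum_comm,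
      ← Finset.sum_add_distrib]
    refine Finset.sum_congr rfl fun i hi => ?_
    rw [← Finset.sum_add_distrib]
    refine Finset.sum_congr rfl fun t ht => ?_
    exact_mod_cast cross_pair hω0 hord hm ((i:ℤ)+0) ((y:ℤ)+4*(t:ℤ)) x
  have P2 : (∑ i ∈ I, ∑ t ∈ Finset.range m,
        (diffCount (cyc ω 8 ((i:ℤ)+2+0)) (cyc ω (q+1) ((y:ℤ)+2+4*(t:ℤ))) x : ℤ))
      + (∑ t ∈ Finset.range m, ∑ j ∈ I,
        (diffCount (cyc ω (q+1) ((y:ℤ)+2+4*(t:ℤ))) (cyc ω 8 ((j:ℤ)+2+0)) x : ℤ))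
      = ∑ i ∈ I, ∑ t ∈ Finset.range m, ∑ s ∈ Finset.range (2*m+1),
        (diffCount (cyc ω (q+1) ((i:ℤ)+2+0+4*(s:ℤ))) (cyc ω (q+1) ((y:ℤ)+2+4*(t:ℤ))) x : ℤ) := by
    rw [show (∑ t ∈ Finset.range m, ∑ j ∈ I,
        (diffCount (cyc ω (q+1) ((y:ℤ)+2+4*(t:ℤ))) (cyc ω 8 ((j:ℤ)+2+0)) x : ℤ))
      = ∑ j ∈ I, ∑ t ∈ Finset.range m,
        (diffCount (cyc ω (q+1) ((y:ℤ)+2+4*(t:ℤ))) (cyc ω 8 ((j:ℤ)+2+0)) x : ℤ) from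
          Finset.sum_comm,
      ← Finset.sum_add_distrib]
    refine Finset.sum_congr rfl fun i hi => ?_
    rw [← Finset.sum_add_distrib]
    refine Finset.sum_congr rfl fun t ht => ?_
    exact_mod_cast cross_pair hω0 hord hm ((i:ℤ)+2+0) ((y:ℤ)+2+4*(t:ℤ)) x
  have P3 : (∑ i ∈ I, ∑ t ∈ Finset.range m,
        (diffCount (cyc ω 8 ((i:ℤ)+1)) (cyc ω (q+1) ((y:ℤ)+4*(t:ℤ)+1)) x : ℤ))
      + (∑ t ∈ Finset.range m, ∑ j ∈ I,
        (diffCount (cyc ω (q+1) ((y:ℤ)+4*(t:ℤ)+1)) (cyc ω 8 ((j:ℤ)+1)) x : ℤ))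
      = ∑ i ∈ I, ∑ t ∈ Finset.range m, ∑ s ∈ Finset.range (2*m+1),
        (diffCount (cyc ω (q+1) ((i:ℤ)+1+4*(s:ℤ))) (cyc ω (q+1) ((y:ℤ)+4*(t:ℤ)+1)) x : ℤ) := by
    rw [show (∑ t ∈ Finset.range m, ∑ j ∈ I,
        (diffCount (cyc ω (q+1) ((y:ℤ)+4*(t:ℤ)+1)) (cyc ω 8 ((j:ℤ)+1)) x : ℤ))
      = ∑ j ∈ I, ∑ t ∈ Finset.range m,
        (diffCount (cyc ω (q+1) ((y:ℤ)+4*(t:ℤ)+1)) (cyc ω 8 ((j:ℤ)+1)) x : ℤ) from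
          Finset.sum_comm,
      ← Finset.sum_add_distrib]
    refine Finset.sum_congr rfl fun i hi => ?_
    rw [← Finset.sum_add_distrib]
    refine Finset.sum_congr rfl fun t ht => ?_
    exact_mod_cast cross_pair hω0 hord hm ((i:ℤ)+1) ((y:ℤ)+4*(t:ℤ)+1) x
  have P4 : (∑ i ∈ I, ∑ t ∈ Finset.range m,
        (diffCount (cyc ω 8 ((i:ℤ)+2+1)) (cyc ω (q+1) ((y:ℤ)+2+4*(t:ℤ)+1)) x : ℤ))
      + (∑ t ∈ Finset.range m, ∑ j ∈ I,
        (diffCount (cyc ω (q+1) ((y:ℤ)+2+4*(t:ℤ)+1)) (cyc ω 8 ((j:ℤ)+2+1)) x : ℤ))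
      = ∑ i ∈ I, ∑ t ∈ Finset.range m, ∑ s ∈ Finset.range (2*m+1),
        (diffCount (cyc ω (q+1) ((i:ℤ)+2+1+4*(s:ℤ))) (cyc ω (q+1) ((y:ℤ)+2+4*(t:ℤ)+1)) x : ℤ) := by
    rw [show (∑ t ∈ Finset.range m, ∑ j ∈ I,
        (diffCount (cyc ω (q+1) ((y:ℤ)+2+4*(t:ℤ)+1)) (cyc ω 8 ((j:ℤ)+2+1)) x : ℤ))
      = ∑ j ∈ I, ∑ t ∈ Finset.range m,
        (diffCount (cyc ω (q+1) ((y:ℤ)+2+4*(t:ℤ)+1)) (cyc ω 8 ((j:ℤ)+2+1)) x : ℤ) from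
          Finset.sum_comm,
      ← Finset.sum_add_distrib]
    refine Finset.sum_congr rfl fun i hi => ?_
    rw [← Finset.sum_add_distrib]
    refine Finset.sum_congr rfl fun t ht => ?_
    exact_mod_cast cross_pair hω0 hord hm ((i:ℤ)+2+1) ((y:ℤ)+2+4*(t:ℤ)+1) x
  -- hK conditions for group lemmas
  have hK1g : ∀ i ∈ I, ∀ t < m, ((4:ℤ) ∣ (((i:ℤ)+0) - ((y:ℤ)+4*(t:ℤ)))) ↔ i = y := by
    intro i hi t ht
    rw [← K1 i hi]
    constructor <;> intro h <;> omega
  have hK2g : ∀ i ∈ I, ∀ t < m, ((4:ℤ) ∣ (((i:ℤ)+2+0) - ((y:ℤ)+2+4*(t:ℤ)))) ↔ i = y := by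
    intro i hi t ht
    rw [← K1 i hi]
    constructor <;> intro h <;> omega
  have hK3g : ∀ i ∈ I, ∀ t < m, ((4:ℤ) ∣ (((i:ℤ)+1) - ((y:ℤ)+4*(t:ℤ)+1))) ↔ i = y := by
    intro i hi t ht
    rw [← K1 i hi]
    constructor <;> intro h <;> omega
  have hK4g : ∀ i ∈ I, ∀ t < m, ((4:ℤ) ∣ (((i:ℤ)+2+1) - ((y:ℤ)+2+4*(t:ℤ)+1))) ↔ i = y := by
    intro i hi t ht
    rw [← K1 i hi]
    constructor <;> intro h <;> omega
  have hqz : (q:ℤ) = 8*(m:ℤ)+3 := by exact_mod_cast congrArg (Nat.cast : ℕ → ℤ) hm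
  have hRHS : (∑ h ∈ Finset.range 2, ∑ i ∈ I, ∑ j ∈ I,
        (diffCount (cyc ω 8 ((i:ℤ) + (h:ℤ))) (cyc ω 8 ((j:ℤ) + 2 + (h:ℤ))) x
          + diffCount (cyc ω 8 ((i:ℤ) + 2 + (h:ℤ))) (cyc ω 8 ((j:ℤ) + (h:ℤ))) x))
      = (∑ i ∈ I, ∑ j ∈ I, diffCount (cyc ω 8 ((i:ℤ)+0)) (cyc ω 8 ((j:ℤ)+2+0)) x)
        + (∑ i ∈ I, ∑ j ∈ I, diffCount (cyc ω 8 ((i:ℤ)+2+0)) (cyc ω 8 ((j:ℤ)+0)) x)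
        + ((∑ i ∈ I, ∑ j ∈ I, diffCount (cyc ω 8 ((i:ℤ)+1)) (cyc ω 8 ((j:ℤ)+2+1)) x)
        + (∑ i ∈ I, ∑ j ∈ I, diffCount (cyc ω 8 ((i:ℤ)+2+1)) (cyc ω 8 ((j:ℤ)+1)) x)) := by
    rw [Finset.sum_range_succ, Finset.sum_range_one]
    simp only [Nat.cast_zero, Nat.cast_one, Finset.sum_add_distrib]
  refine ⟨fun hx0 => ?_, fun hx0 => ?_⟩
  · -- x = 0
    subst hx0
    rw [hd01, hd10, hd23, hd32, hRHS]
    zify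
    have G1 := group_zero hω0 hord hm I y hy hIcard
      (fun i => (i:ℤ)+0) (fun t => (y:ℤ)+4*(t:ℤ)) hK1g
    have G2 := group_zero hω0 hord hm I y hy hIcard
      (fun i => (i:ℤ)+2+0) (fun t => (y:ℤ)+2+4*(t:ℤ)) hK2g
    have G3 := group_zero hω0 hord hm I y hy hIcard
      (fun i => (i:ℤ)+1) (fun t => (y:ℤ)+4*(t:ℤ)+1) hK3g
    have G4 := group_zero hω0 hord hm I y hy hIcard
      (fun i => (i:ℤ)+2+1) (fun t => (y:ℤ)+2+4*(t:ℤ)+1) hK4g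
    have H1 := LL_group_zero (F := F) hω0 hord hm
      (fun t => (y:ℤ)+2+4*(t:ℤ)) (fun t => (y:ℤ)+4*(t:ℤ))
      (fun t ht t' ht' => bb_help2 hm ⟨(t:ℤ)-(t':ℤ), by ring⟩)
    have H2 := LL_group_zero (F := F) hω0 hord hm
      (fun t => (y:ℤ)+4*(t:ℤ)) (fun t => (y:ℤ)+2+4*(t:ℤ))
      (fun t ht t' ht' => bb_help2 hm ⟨(t:ℤ)-(t':ℤ)-1, by ring⟩)
    have H3 := LL_group_zero (F := F) hω0 hord hm
      (fun t => (y:ℤ)+2+4*(t:ℤ)+1) (fun t => (y:ℤ)+4*(t:ℤ)+1)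
      (fun t ht t' ht' => bb_help2 hm ⟨(t:ℤ)-(t':ℤ), by ring⟩)
    have H4 := LL_group_zero (F := F) hω0 hord hm
      (fun t => (y:ℤ)+4*(t:ℤ)+1) (fun t => (y:ℤ)+2+4*(t:ℤ)+1)
      (fun t ht t' ht' => bb_help2 hm ⟨(t:ℤ)-(t':ℤ)-1, by ring⟩)
    linear_combination P1 + P2 + P3 + P4 + G1 + G2 + G3 + G4 + H1 + H2 + H3 + H4
      + 4*(m:ℤ)*hqz
  · -- x ≠ 0
    obtain ⟨e, he⟩ := hω x hx0
    rw [hd01, hd10, hd23, hd32, hRHS]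
    zify
    have G1 := group_sum hω0 hord hm hω hq hF I y hy hIcard
      (fun i => (i:ℤ)+0) (fun t => (y:ℤ)+4*(t:ℤ)) hK1g hx0 e he
    have G2 := group_sum hω0 hord hm hω hq hF I y hy hIcard
      (fun i => (i:ℤ)+2+0) (fun t => (y:ℤ)+2+4*(t:ℤ)) hK2g hx0 e he
    have G3 := group_sum hω0 hord hm hω hq hF I y hy hIcard
      (fun i => (i:ℤ)+1) (fun t => (y:ℤ)+4*(t:ℤ)+1) hK3g hx0 e he
    have G4 := group_sum hω0 hord hm hω hq hF I y hy hIcard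
      (fun i => (i:ℤ)+2+1) (fun t => (y:ℤ)+2+4*(t:ℤ)+1) hK4g hx0 e he
    have H1 := LL_group hω0 hord hm hω hq hF
      (fun t => (y:ℤ)+2+4*(t:ℤ)) (fun t => (y:ℤ)+4*(t:ℤ))
      (fun t ht t' ht' => bb_help2 hm ⟨(t:ℤ)-(t':ℤ), by ring⟩) hx0 e he
    have H2 := LL_group hω0 hord hm hω hq hF
      (fun t => (y:ℤ)+4*(t:ℤ)) (fun t => (y:ℤ)+2+4*(t:ℤ))
      (fun t ht t' ht' => bb_help2 hm ⟨(t:ℤ)-(t':ℤ)-1, by ring⟩) hx0 e he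
    have H3 := LL_group hω0 hord hm hω hq hF
      (fun t => (y:ℤ)+2+4*(t:ℤ)+1) (fun t => (y:ℤ)+4*(t:ℤ)+1)
      (fun t ht t' ht' => bb_help2 hm ⟨(t:ℤ)-(t':ℤ), by ring⟩) hx0 e he
    have H4 := LL_group hω0 hord hm hω hq hF
      (fun t => (y:ℤ)+4*(t:ℤ)+1) (fun t => (y:ℤ)+2+4*(t:ℤ)+1)
      (fun t ht t' ht' => bb_help2 hm ⟨(t:ℤ)-(t':ℤ)-1, by ring⟩) hx0 e he
    have hR : (∑ i ∈ I, if (4:ℤ) ∣ (((i:ℤ)+0) - (e:ℤ)) then (1:ℤ) else 0)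
        + (∑ i ∈ I, if (4:ℤ) ∣ (((i:ℤ)+2+0) - (e:ℤ)) then (1:ℤ) else 0)
        + (∑ i ∈ I, if (4:ℤ) ∣ (((i:ℤ)+1) - (e:ℤ)) then (1:ℤ) else 0)
        + (∑ i ∈ I, if (4:ℤ) ∣ (((i:ℤ)+2+1) - (e:ℤ)) then (1:ℤ) else 0) = 3 := by
      rw [← Finset.sum_add_distrib, ← Finset.sum_add_distrib, ← Finset.sum_add_distrib]
      have h1 : ∀ i ∈ I, ((if (4:ℤ) ∣ (((i:ℤ)+0) - (e:ℤ)) then (1:ℤ) else 0)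
          + (if (4:ℤ) ∣ (((i:ℤ)+2+0) - (e:ℤ)) then (1:ℤ) else 0)
          + (if (4:ℤ) ∣ (((i:ℤ)+1) - (e:ℤ)) then (1:ℤ) else 0)
          + (if (4:ℤ) ∣ (((i:ℤ)+2+1) - (e:ℤ)) then (1:ℤ) else 0)) = 1 := by
        intro i _
        split_ifs <;> omega
      rw [Finset.sum_congr rfl h1, Finset.sum_const, hIcard, nsmul_eq_mul]
      norm_num
    linear_combination P1 + P2 + P3 + P4 + G1 + G2 + G3 + G4 + H1 + H2 + H3 + H4
      - (m:ℤ)*hR
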